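/- arXiv:1407.3496 — 6 statements merged into one kernel-verified Lean document; each statement's English description precedes it below -/
import Mathlib

section
/- Let S be a finite set of size n ≥ 2, and let F, G : S → R be functions into a set R with G non-constant. Equip the set Σ of total orderings of S (i.e., bijections σ : {1,...,n} → S) with the uniform probability measure. Then the probability of the event O = {σ ∈ Σ : F(σ(i)) = G(σ(i+1)) for all 1 ≤ i < n} is at most 1/(n-1). -/
open scoped Classical

namespace Stmt0Aux

set_option linter.unusedSectionVars false

open Fin.NatCast Fin.CommRing

variable {S : Type*} [Fintype S]

def Phi (n : ℕ) (σ : Fin n ≃ S) : Equiv.Perm S :=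
  Equiv.permCongr σ (finRotate n)

lemma rot_apply {n : ℕ} [NeZero n] (i : Fin n) : finRotate n i = i + 1 := by
  obtain ⟨m, rfl⟩ := Nat.exists_eq_succ_of_ne_zero (NeZero.ne n)
  exact finRotate_succ_apply i

lemma phi_apply {n : ℕ} [NeZero n] (σ : Fin n ≃ S) (i : Fin n) :
    Phi n σ (σ i) = σ (i + 1) := by
  simp [Phi, Equiv.permCongr_apply, rot_apply]

lemma phi_pow {n : ℕ} [NeZero n] (σ : Fin n ≃ S) (i : Fin n) (m : ℕ) :
    ((Phi n σ) ^ m) (σ i) = σ (i + (m : Fin n)) := by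
  induction m with
  | zero => simp
  | succ m ih =>
      rw [pow_succ', Equiv.Perm.mul_apply, ih, phi_apply]
      congr 1
      push_cast
      ring

lemma orbit_cover {n : ℕ} [NeZero n] (σ : Fin n ≃ S) (x y : S) :
    ∃ m : ℕ, m < n ∧ ((Phi n σ) ^ m) x = y := by
  set i := σ.symm x with hi
  set i' := σ.symm y with hi'
  refine ⟨(i' - i).val, (i' - i).isLt, ?_⟩
  have hx : x = σ i := by simp [hi]
  rw [hx, phi_pow, Fin.cast_val_eq_self]
  simp [hi']

lemma pow_inj {n : ℕ} [NeZero n] (σ : Fin n ≃ S) (x : S) {a b : ℕ}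
    (ha : a < n) (hb : b < n) (h : ((Phi n σ) ^ a) x = ((Phi n σ) ^ b) x) : a = b := by
  set i := σ.symm x with hi
  have hx : x = σ i := by simp [hi]
  rw [hx, phi_pow, phi_pow] at h
  have h2 : (a : Fin n) = (b : Fin n) := add_left_cancel (σ.injective h)
  have := congrArg Fin.val h2
  rwa [Fin.val_natCast, Fin.val_natCast, Nat.mod_eq_of_lt ha, Nat.mod_eq_of_lt hb] at this


/-- shifted ordering -/
def shift {n : ℕ} [NeZero n] (σ : Fin n ≃ S) (k : Fin n) : Fin n ≃ S :=
  (Equiv.addRight k).trans σ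

lemma shift_apply {n : ℕ} [NeZero n] (σ : Fin n ≃ S) (k i : Fin n) : shift σ k i = σ (i + k) := rfl

lemma phi_shift {n : ℕ} [NeZero n] (σ : Fin n ≃ S) (k : Fin n) :
    Phi n (shift σ k) = Phi n σ := by
  apply Equiv.ext
  intro x
  have hx : x = shift σ k ((shift σ k).symm x) := by simp
  rw [hx, phi_apply]
  set i := (shift σ k).symm x
  rw [shift_apply, shift_apply, phi_apply]
  congr 1
  ring

lemma fiber_eq {n : ℕ} [NeZero n] (σ τ : Fin n ≃ S) (h : Phi n σ = Phi n τ) :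
    ∃ k : Fin n, τ = shift σ k := by
  refine ⟨σ.symm (τ 0), ?_⟩
  have key : ∀ m : ℕ, σ.symm (τ (m : Fin n)) = σ.symm (τ 0) + (m : Fin n) := by
    intro m
    induction m with
    | zero => simp
    | succ m ih =>
        have h1 : τ ((m : Fin n) + 1) = Phi n τ (τ (m : Fin n)) := (phi_apply τ _).symm
        rw [← h] at h1
        have h2 : Phi n σ (τ (m : Fin n)) = σ (σ.symm (τ (m : Fin n)) + 1) := by
          conv_lhs => rw [show τ (m : Fin n) = σ (σ.symm (τ (m:Fin n))) by simp]
          rw [phi_apply]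
        push_cast
        rw [h1, h2, ih]
        simp [add_assoc]
  apply Equiv.ext
  intro i
  rw [shift_apply]
  have := key i.val
  rw [Fin.cast_val_eq_self] at this
  have : τ i = σ (σ.symm (τ 0) + i) := by
    conv_lhs => rw [show τ i = σ (σ.symm (τ i)) by simp, this]
  rw [this]
  congr 1
  ring

lemma fiber_card {n : ℕ} [NeZero n] (σ : Fin n ≃ S) :
    (Finset.univ.filter (fun τ : Fin n ≃ S => Phi n τ = Phi n σ)).card = n := by
  have heq : (Finset.univ.filter (fun τ : Fin n ≃ S => Phi n τ = Phi n σ))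
      = Finset.univ.image (fun k : Fin n => shift σ k) := by
    apply Finset.ext
    intro τ
    simp only [Finset.mem_filter, Finset.mem_univ, true_and, Finset.mem_image]
    constructor
    · intro h
      obtain ⟨k, rfl⟩ := fiber_eq σ τ h.symm
      exact ⟨k, rfl⟩
    · rintro ⟨k, rfl⟩
      exact phi_shift σ k
  rw [heq, Finset.card_image_of_injective _ ?_, Finset.card_univ, Fintype.card_fin]
  intro k k' hkk
  have := congrArg (fun (e : Fin n ≃ S) => e 0) hkk
  simp only [shift_apply, zero_add] at this
  exact σ.injective this

lemma mem_range_of_orbit {n : ℕ} [NeZero n] (hcard : Fintype.card S = n)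
    (ρ : Equiv.Perm S) (x : S) (h : ∀ y, ∃ j : ℕ, (ρ ^ j) x = y) :
    ∃ σ : Fin n ≃ S, Phi n σ = ρ := by
  -- find period d ≤ n
  have hcardlt : Fintype.card S < Fintype.card (Fin (n+1)) := by simp [hcard]
  obtain ⟨j₁, j₂, hne, hfe⟩ := Fintype.exists_ne_map_eq_of_card_lt
    (fun j : Fin (n+1) => (ρ ^ j.val) x) hcardlt
  have cancel : ∀ a b : ℕ, a < b → (ρ ^ a) x = (ρ ^ b) x → (ρ ^ (b - a)) x = x := by
    intro a b hab he
    have : (ρ ^ a) ((ρ ^ (b-a)) x) = (ρ ^ a) x := by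
      rw [← Equiv.Perm.mul_apply, ← pow_add]
      have : a + (b - a) = b := by omega
      rw [this, ← he]
    exact (Equiv.injective _) this
  have hvne : j₁.val ≠ j₂.val := fun hc => hne (Fin.ext hc)
  obtain ⟨d, hd1, hdn, hper⟩ : ∃ d, 1 ≤ d ∧ d ≤ n ∧ (ρ ^ d) x = x := by
    rcases Nat.lt_or_ge j₁.val j₂.val with hlt | hge
    · exact ⟨j₂.val - j₁.val, by omega, by have := j₂.isLt; omega,
        cancel _ _ hlt hfe⟩
    · have hlt2 : j₂.val < j₁.val := by omega
      exact ⟨j₁.val - j₂.val, by omega, by have := j₁.isLt; omega,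
        cancel _ _ hlt2 hfe.symm⟩
  have hq : ∀ q : ℕ, (ρ ^ (d * q)) x = x := by
    intro q
    induction q with
    | zero => simp
    | succ q ih => rw [Nat.mul_succ, pow_add, Equiv.Perm.mul_apply, hper, ih]
  have hmod : ∀ j : ℕ, (ρ ^ j) x = (ρ ^ (j % d)) x := by
    intro j
    conv_lhs => rw [← Nat.mod_add_div j d]
    rw [pow_add, Equiv.Perm.mul_apply, hq]
  -- surjectivity of the Fin d enumeration, giving n ≤ d
  have hsurjd : Function.Surjective (fun i : Fin d => (ρ ^ i.val) x) := by
    intro y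
    obtain ⟨j, hj⟩ := h y
    refine ⟨⟨j % d, Nat.mod_lt _ (by omega)⟩, ?_⟩
    show (ρ ^ (j % d)) x = y
    rw [← hmod, hj]
  have hnd : n ≤ d := by
    have := Fintype.card_le_of_surjective _ hsurjd
    simpa [hcard] using this
  have hdn' : d = n := le_antisymm hdn hnd
  -- the enumeration over Fin n
  have hsurj : Function.Surjective (fun i : Fin n => (ρ ^ i.val) x) := by
    intro y
    obtain ⟨i, hi⟩ := hsurjd y
    exact ⟨⟨i.val, by omega⟩, hi⟩
  have hbij : Function.Bijective (fun i : Fin n => (ρ ^ i.val) x) :=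
    (Fintype.bijective_iff_surjective_and_card _).2 ⟨hsurj, by simp [hcard]⟩
  refine ⟨Equiv.ofBijective _ hbij, ?_⟩
  apply Equiv.ext
  intro y
  obtain ⟨i, rfl⟩ := hbij.surjective y
  show Phi n (Equiv.ofBijective _ hbij) ((ρ ^ i.val) x) = ρ ((ρ ^ i.val) x)
  have hoi : (ρ ^ i.val) x = Equiv.ofBijective _ hbij i := rfl
  rw [hoi, phi_apply]
  show (ρ ^ (i+1).val) x = ρ ((ρ ^ i.val) x)
  rw [← Equiv.Perm.mul_apply, ← pow_succ']
  have hv : (i + 1).val = (i.val + 1) % n := by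
    rw [Fin.add_def]
    simp [Fin.val_one', Nat.add_mod]
  subst hdn'
  rw [hv]
  exact (hmod _).symm


/-- relocation of `x0` to the position right after `z`. -/
noncomputable def reloc (π : Equiv.Perm S) (x0 z : S) : Equiv.Perm S :=
  π * (Equiv.swap (π⁻¹ x0) x0 * Equiv.swap x0 z)

lemma reloc_mem_range {n : ℕ} [NeZero n] (hcard : Fintype.card S = n)
    (σ : Fin n ≃ S) (x0 z : S) (hz : z ≠ x0) (hpz : (Phi n σ) z ≠ x0) :
    ∃ σ' : Fin n ≃ S, Phi n σ' = reloc (Phi n σ) x0 z := by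
  set π := Phi n σ with hπ
  set p := π⁻¹ x0 with hpdef
  have hp : π p = x0 := by simp [hpdef]
  have hpow1 : ∀ m : ℕ, (π ^ (m+1)) x0 = π ((π ^ m) x0) := by
    intro m; rw [pow_succ', Equiv.Perm.mul_apply]
  -- basic distinctness
  have hn2 : 2 ≤ n := by
    have h2 : ({z, x0} : Finset S).card = 2 := by
      rw [Finset.card_insert_of_notMem (by simp [hz]), Finset.card_singleton]
    calc 2 = ({z, x0} : Finset S).card := h2.symm
      _ ≤ Fintype.card S := Finset.card_le_card (Finset.subset_univ _)
      _ = n := hcard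
  have hfix : π x0 ≠ x0 := by
    intro hc
    have : (1 : ℕ) = 0 := pow_inj σ x0 (by omega) (by omega) (by simpa using hc)
    omega
  have hpx0 : p ≠ x0 := by
    intro hc
    apply hfix
    have := hp
    rw [hc] at this
    exact this
  have hzp : z ≠ p := by
    intro hc; apply hpz; rw [hc, hp]
  have hn3 : 3 ≤ n := by
    have h3 : ({z, x0, p} : Finset S).card = 3 := by
      rw [Finset.card_insert_of_notMem (by simp [hz, hzp]),
          Finset.card_insert_of_notMem (by simp [Ne.symm hpx0]),
          Finset.card_singleton]
    calc 3 = ({z, x0, p} : Finset S).card := h3.symm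
      _ ≤ Fintype.card S := Finset.card_le_card (Finset.subset_univ _)
      _ = n := hcard
  -- powers of π at x0
  have hpown : (π ^ n) x0 = x0 := by
    have := phi_pow σ (σ.symm x0) n
    rw [← hπ, Equiv.apply_symm_apply] at this
    rw [this, Fin.natCast_self, add_zero, Equiv.apply_symm_apply]
  have hppred : (π ^ (n-1)) x0 = p := by
    apply π.injective
    rw [hp, ← hpow1]
    have : n - 1 + 1 = n := by omega
    rw [this, hpown]
  obtain ⟨k, hkn, hkz⟩ := orbit_cover σ x0 z
  rw [← hπ] at hkz
  have hk0 : k ≠ 0 := by rintro rfl; exact hz (by simpa using hkz.symm)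
  have hkn1 : k ≠ n - 1 := by rintro rfl; exact hzp (by rw [← hkz, hppred])
  -- the 3-cycle
  set c3 := Equiv.swap p x0 * Equiv.swap x0 z with hc3
  have c3p : c3 p = x0 := by
    rw [hc3, Equiv.Perm.mul_apply, Equiv.swap_apply_of_ne_of_ne hpx0 hzp.symm,
        Equiv.swap_apply_left]
  have c3x : c3 x0 = z := by
    rw [hc3, Equiv.Perm.mul_apply, Equiv.swap_apply_left,
        Equiv.swap_apply_of_ne_of_ne hzp hz]
  have c3z : c3 z = p := by
    rw [hc3, Equiv.Perm.mul_apply, Equiv.swap_apply_right, Equiv.swap_apply_right]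
  have c3other : ∀ y, y ≠ p → y ≠ x0 → y ≠ z → c3 y = y := by
    intro y h1 h2 h3
    rw [hc3, Equiv.Perm.mul_apply, Equiv.swap_apply_of_ne_of_ne h2 h3,
        Equiv.swap_apply_of_ne_of_ne h1 h2]
  set ρ := reloc π x0 z with hρ
  have hρa : ∀ y, ρ y = π (c3 y) := by
    intro y; rw [hρ, reloc, ← hpdef, ← hc3, Equiv.Perm.mul_apply]
  -- key step lemma
  have hstep : ∀ m : ℕ, m < n → m ≠ 0 → m ≠ k → m ≠ n - 1 →
      ρ ((π ^ m) x0) = (π ^ (m+1)) x0 := by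
    intro m hm h0 hk hn1
    have hne1 : (π ^ m) x0 ≠ p := by
      rw [← hppred]; intro hc; exact hn1 (pow_inj σ x0 hm (by omega) (by rw [← hπ]; exact hc))
    have hne2 : (π ^ m) x0 ≠ x0 := by
      intro hc
      exact h0 (pow_inj σ x0 hm (by omega) (by rw [← hπ]; simpa using hc))
    have hne3 : (π ^ m) x0 ≠ z := by
      rw [← hkz]; intro hc; exact hk (pow_inj σ x0 hm hkn (by rw [← hπ]; exact hc))
    rw [hρa, c3other _ hne1 hne2 hne3, hpow1]
  -- the path
  have L1 : ∀ j : ℕ, 1 ≤ j → j ≤ n - 1 - k → (ρ ^ j) x0 = (π ^ (k + j)) x0 := by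
    intro j
    induction j with
    | zero => intro h; omega
    | succ j ih =>
        intro _ hj
        rcases Nat.eq_zero_or_pos j with rfl | hj1
        · rw [pow_one, hρa, c3x, ← hkz, ← hpow1]
        · have hkj : k + (j + 1) = k + j + 1 := by omega
          rw [hkj, pow_succ', Equiv.Perm.mul_apply, ih (by omega) (by omega),
              hstep (k + j) (by omega) (by omega) (by omega) (by omega)]
  have L3 : ∀ i : ℕ, 1 ≤ i → i ≤ k → (ρ ^ (n - 1 - k + i)) x0 = (π ^ i) x0 := by
    intro i
    induction i with
    | zero => intro h; omega
    | succ i ih =>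
        intro _ hi
        rcases Nat.eq_zero_or_pos i with rfl | hi1
        · -- base : i = 1
          rw [pow_succ', Equiv.Perm.mul_apply]
          have hL : (ρ ^ (n - 1 - k)) x0 = p := by
            rw [L1 (n-1-k) (by omega) (le_refl _)]
            have : k + (n - 1 - k) = n - 1 := by omega
            rw [this, hppred]
          rw [hL, hρa, c3p]
          simp
        · have hss : n - 1 - k + (i+1) = (n - 1 - k + i) + 1 := by omega
          rw [hss, pow_succ', Equiv.Perm.mul_apply, ih (by omega) (by omega),
              hstep i (by omega) (by omega) (by omega) (by omega), hpow1]
  -- coverage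
  have hcov : ∀ y, ∃ j : ℕ, (ρ ^ j) x0 = y := by
    intro y
    obtain ⟨m, hm, hmy⟩ := orbit_cover σ x0 y
    rw [← hπ] at hmy
    rcases Nat.eq_zero_or_pos m with rfl | hm1
    · exact ⟨0, by simpa using hmy⟩
    · rcases Nat.lt_or_ge k m with hkm | hmk
      · refine ⟨m - k, ?_⟩
        rw [L1 (m - k) (by omega) (by omega)]
        have : k + (m - k) = m := by omega
        rw [this, hmy]
      · refine ⟨n - 1 - k + m, ?_⟩
        rw [L3 m (by omega) (by omega), hmy]
  exact mem_range_of_orbit hcard ρ x0 hcov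


end Stmt0Aux

open scoped Classical
open Stmt0Aux Finset
open Fin.NatCast Fin.CommRing

/-- Lemma 3.3 (key combinatorial estimate): if `S` has `n ≥ 2` elements, `F, G : S → R`
with `G` non-constant, and the set of total orderings of `S` (bijections `Fin n ≃ S`)
carries the uniform probability measure, then the probability of the event
`O = {σ : F(σ i) = G(σ (i+1)) for all 1 ≤ i < n}` is at most `1/(n-1)`. -/
theorem stmt_0 {S R : Type*} [Fintype S] (n : ℕ) (hn : 2 ≤ n)
    (hcard : Fintype.card S = n) (F G : S → R)
    (hG : ¬ ∀ a b : S, G a = G b) :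
    ((Finset.univ.filter (fun σ : Fin n ≃ S =>
        ∀ i j : Fin n, (j : ℕ) = (i : ℕ) + 1 → F (σ i) = G (σ j))).card : ℝ)
      / (Fintype.card (Fin n ≃ S) : ℝ) ≤ 1 / ((n : ℝ) - 1) := by
  haveI : NeZero n := ⟨by omega⟩
  classical
  -- notation
  set OO := (Finset.univ.filter (fun σ : Fin n ≃ S =>
      ∀ i j : Fin n, (j : ℕ) = (i : ℕ) + 1 → F (σ i) = G (σ j))) with hOO
  set Vv : Equiv.Perm S → Finset S :=
    (fun π => Finset.univ.filter (fun x => G (π x) ≠ F x)) with hVv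
  set Rng : Finset (Equiv.Perm S) := Finset.univ.image (Phi n) with hRng
  set Pf : Finset (Equiv.Perm S) := Rng.filter (fun π => Vv π = ∅) with hPf
  set P1 : Finset (Equiv.Perm S) := Rng.filter (fun π => (Vv π).card = 1) with hP1
  set PR : Finset (Equiv.Perm S) := Rng.filter (fun π => 2 ≤ (Vv π).card) with hPR
  have hlast : n - 1 < n := by omega
  set last : Fin n := ⟨n - 1, hlast⟩ with hlastdef
  -- successor value of Fin addition
  have hsucc : ∀ i : Fin n, (i : ℕ) + 1 < n → ((i + 1 : Fin n) : ℕ) = (i : ℕ) + 1 := by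
    intro i hi
    have h1 : ((i + 1 : Fin n) : ℕ) = ((i : ℕ) + ((1 : Fin n) : ℕ)) % n := rfl
    rw [h1, Fin.val_one']
    rw [Nat.mod_eq_of_lt (show 1 < n by omega)]
    exact Nat.mod_eq_of_lt hi
  -- membership characterization
  have hmem : ∀ σ : Fin n ≃ S, σ ∈ OO ↔ Vv (Phi n σ) ⊆ {σ last} := by
    intro σ
    rw [hOO, Finset.mem_filter]
    simp only [Finset.mem_univ, true_and]
    constructor
    · intro hσ x hx
      rw [hVv] at hx
      simp only [Finset.mem_filter, Finset.mem_univ, true_and] at hx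
      by_contra hxl
      rw [Finset.mem_singleton] at hxl
      set i := σ.symm x with hidef
      have hxi : x = σ i := by simp [hidef]
      have hine : (i : ℕ) + 1 < n := by
        rcases Nat.lt_or_ge ((i : ℕ) + 1) n with h | h
        · exact h
        · exfalso
          apply hxl
          rw [hxi]
          congr 1
          rw [hlastdef]
          apply Fin.ext
          have := i.isLt
          simp only []
          omega
      have hcon := hσ i (i + 1) (hsucc i hine)
      apply hx
      rw [hxi, phi_apply, hcon]
    · intro h i j hj
      have hine : (i : ℕ) + 1 < n := by rw [← hj]; exact j.isLt
      have hij : i + 1 = j := by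
        apply Fin.ext
        rw [hsucc i hine, hj]
      by_contra hne
      have hxmem : σ i ∈ Vv (Phi n σ) := by
        rw [hVv]
        simp only [Finset.mem_filter, Finset.mem_univ, true_and]
        rw [phi_apply, hij]
        exact fun hc => hne hc.symm
      have := h hxmem
      rw [Finset.mem_singleton] at this
      have hil : i = last := σ.injective this
      rw [hlastdef] at hil
      have := congrArg Fin.val hil
      simp only [] at this
      omega
  -- fixed-point freeness on the range
  have hfixR : ∀ π ∈ Rng, ∀ x : S, π x ≠ x := by
    intro π hπ x hc
    rw [hRng, Finset.mem_image] at hπ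
    obtain ⟨σ, _, rfl⟩ := hπ
    have : (1 : ℕ) = 0 := pow_inj σ x (by omega) (by omega) (by simpa using hc)
    omega
  -- full cycles satisfy all constraints
  have hful : ∀ π ∈ Pf, ∀ x : S, G (π x) = F x := by
    intro π hπ x
    rw [hPf, Finset.mem_filter] at hπ
    have := hπ.2
    rw [hVv, Finset.filter_eq_empty_iff] at this
    have := this (Finset.mem_univ x)
    push_neg at this
    exact this
  -- splitting OO
  set OA := OO.filter (fun σ => Vv (Phi n σ) = ∅) with hOA
  set OB := OO.filter (fun σ => ¬ Vv (Phi n σ) = ∅) with hOB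
  have hsplit : OA.card + OB.card = OO.card := Finset.card_filter_add_card_filter_not _
  -- OA bound
  have hOAbound : OA.card ≤ n * Pf.card := by
    calc OA.card ≤ n * (OA.image (Phi n)).card := by
          apply Finset.card_le_mul_card_image
          intro π hπ
          rw [Finset.mem_image] at hπ
          obtain ⟨σ, _, rfl⟩ := hπ
          calc (OA.filter (fun τ => Phi n τ = Phi n σ)).card
              ≤ (Finset.univ.filter (fun τ : Fin n ≃ S => Phi n τ = Phi n σ)).card :=
                Finset.card_le_card (by
                  intro τ hτ
                  rw [Finset.mem_filter] at hτ ⊢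
                  exact ⟨Finset.mem_univ _, hτ.2⟩)
            _ = n := fiber_card σ
      _ ≤ n * Pf.card := by
          apply Nat.mul_le_mul_left
          apply Finset.card_le_card
          intro π hπ
          rw [Finset.mem_image] at hπ
          obtain ⟨σ, hσ, rfl⟩ := hπ
          rw [hOA, Finset.mem_filter] at hσ
          rw [hPf, Finset.mem_filter]
          exact ⟨Finset.mem_image_of_mem _ (Finset.mem_univ _), hσ.2⟩
  -- OB bound
  have hOBbound : OB.card ≤ P1.card := by
    apply Finset.card_le_card_of_injOn (Phi n)
    · intro σ hσ
      rw [hOB, Finset.mem_coe, Finset.mem_filter] at hσ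
      obtain ⟨hσO, hσne⟩ := hσ
      have hsub := (hmem σ).1 hσO
      have hVeq : Vv (Phi n σ) = {σ last} := by
        rcases Finset.subset_singleton_iff.1 hsub with h | h
        · exact absurd h hσne
        · exact h
      rw [Finset.mem_coe, hP1, Finset.mem_filter]
      exact ⟨Finset.mem_image_of_mem _ (Finset.mem_univ _), by rw [hVeq]; simp⟩
    · intro σ hσ τ hτ hst
      simp only [Finset.mem_coe] at hσ hτ
      rw [hOB, Finset.mem_filter] at hσ hτ
      obtain ⟨k, rfl⟩ := fiber_eq σ τ hst
      have hVσ : Vv (Phi n σ) = {σ last} := by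
        rcases Finset.subset_singleton_iff.1 ((hmem σ).1 hσ.1) with h | h
        · exact absurd h hσ.2
        · exact h
      have hVτ : Vv (Phi n (shift σ k)) = {(shift σ k) last} := by
        rcases Finset.subset_singleton_iff.1 ((hmem _).1 hτ.1) with h | h
        · exact absurd h hτ.2
        · exact h
      rw [← hst] at hVτ
      rw [hVσ] at hVτ
      have : σ last = shift σ k last := Finset.singleton_injective hVτ
      rw [shift_apply] at this
      have hk0 : last + k = last := (σ.injective this).symm
      have : k = 0 := by
        have := congrArg (fun t => t - last) hk0
        simpa [add_comm] using this
      subst this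
      apply Equiv.ext
      intro i
      rw [shift_apply, add_zero]
  -- disjointness
  have hdisjcard : Pf.card + P1.card + PR.card ≤ Rng.card := by
    have d1 : Disjoint Pf P1 := by
      rw [Finset.disjoint_left]
      intro π h1 h2
      rw [hPf, Finset.mem_filter] at h1
      rw [hP1, Finset.mem_filter] at h2
      rw [h1.2] at h2
      simp at h2
    have d2 : Disjoint (Pf ∪ P1) PR := by
      rw [Finset.disjoint_left]
      intro π h1 h2
      rw [hPR, Finset.mem_filter] at h2
      rcases Finset.mem_union.1 h1 with h | h
      · rw [hPf, Finset.mem_filter] at h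
        rw [h.2] at h2
        simp at h2
      · rw [hP1, Finset.mem_filter] at h
        omega
    calc Pf.card + P1.card + PR.card = (Pf ∪ P1).card + PR.card := by
          rw [Finset.card_union_of_disjoint d1]
      _ = ((Pf ∪ P1) ∪ PR).card := (Finset.card_union_of_disjoint d2).symm
      _ ≤ Rng.card := Finset.card_le_card (by
          intro π hπ
          rcases Finset.mem_union.1 hπ with h | h
          · rcases Finset.mem_union.1 h with h' | h'
            · exact Finset.mem_of_mem_filter _ h'
            · exact Finset.mem_of_mem_filter _ h'
          · exact Finset.mem_of_mem_filter _ h)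
  -- total count
  have htotal : Rng.card * n = Fintype.card (Fin n ≃ S) := by
    rw [← Finset.card_univ]
    rw [Finset.card_eq_sum_card_fiberwise
      (f := Phi n) (t := Rng) (fun σ _ => Finset.mem_image_of_mem _ (Finset.mem_univ σ))]
    rw [Finset.sum_congr rfl (fun π hπ => ?_), Finset.sum_const, smul_eq_mul]
    rw [hRng, Finset.mem_image] at hπ
    obtain ⟨σ, _, rfl⟩ := hπ
    exact fiber_card σ
  -- the key estimate
  have hkey : (n - 2) * Pf.card ≤ PR.card := by
    by_cases hFG : ∀ x : S, F x = G x
    · -- then Pf is empty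
      have hPfe : Pf = ∅ := by
        rw [Finset.eq_empty_iff_forall_notMem]
        intro π hπ
        have hfull := hful π hπ
        rw [hPf, Finset.mem_filter, hRng, Finset.mem_image] at hπ
        obtain ⟨⟨σ, _, rfl⟩, _⟩ := hπ
        have hconst : ∀ m : ℕ, G (σ (m : Fin n)) = G (σ 0) := by
          intro m
          induction m with
          | zero => simp
          | succ m ih =>
              have h1 : ((m+1 : ℕ) : Fin n) = (m : Fin n) + 1 := by push_cast; ring
              rw [h1, ← phi_apply σ (m : Fin n), hfull, hFG, ih]
        apply hG
        intro a b
        have ha := hconst ((σ.symm a) : ℕ)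
        have hb := hconst ((σ.symm b) : ℕ)
        rw [Fin.cast_val_eq_self, Equiv.apply_symm_apply] at ha hb
        rw [ha, hb]
      rw [hPfe]
      simp
    · push_neg at hFG
      obtain ⟨x0, hx0⟩ := hFG
      -- validity data
      have hvalid : ∀ π ∈ Pf, ∀ z ∈ Finset.univ \ {x0, π⁻¹ x0},
          z ≠ x0 ∧ π z ≠ x0 := by
        intro π hπ z hz
        rw [Finset.mem_sdiff, Finset.mem_insert, Finset.mem_singleton] at hz
        push_neg at hz
        refine ⟨hz.2.1, ?_⟩
        intro hc
        apply hz.2.2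
        rw [← hc]
        simp
      have hPfRng : ∀ π ∈ Pf, π ∈ Rng := fun π hπ => Finset.mem_of_mem_filter _ hπ
      -- membership of relocations in PR
      have hrelocPR : ∀ π ∈ Pf, ∀ z ∈ Finset.univ \ {x0, π⁻¹ x0},
          reloc π x0 z ∈ PR := by
        intro π hπ z hz
        obtain ⟨hz1, hz2⟩ := hvalid π hπ z hz
        have hfree := hfixR π (hPfRng π hπ)
        have hfull := hful π hπ
        set p := π⁻¹ x0 with hpdef
        have hp : π p = x0 := by simp [hpdef]
        have hpx0 : p ≠ x0 := by
          intro hc; exact hfree x0 (by rw [← hc, hp, hc])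
        have hzp : z ≠ p := by
          intro hc; apply hz2; rw [hc, hp]
        set ρ := reloc π x0 z with hρdef
        have hρp : ρ p = π x0 := by
          rw [hρdef, reloc, ← hpdef, Equiv.Perm.mul_apply, Equiv.Perm.mul_apply,
              Equiv.swap_apply_of_ne_of_ne hpx0 hzp.symm, Equiv.swap_apply_left]
        have hρx : ρ x0 = π z := by
          rw [hρdef, reloc, ← hpdef, Equiv.Perm.mul_apply, Equiv.Perm.mul_apply,
              Equiv.swap_apply_left, Equiv.swap_apply_of_ne_of_ne hzp hz1]
        have hρz : ρ z = x0 := by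
          rw [hρdef, reloc, ← hpdef, Equiv.Perm.mul_apply, Equiv.Perm.mul_apply,
              Equiv.swap_apply_right, Equiv.swap_apply_right, hp]
        -- range membership
        have hρRng : ρ ∈ Rng := by
          have := hPfRng π hπ
          rw [hRng, Finset.mem_image] at this ⊢
          obtain ⟨σ, _, hσ⟩ := this
          obtain ⟨σ', hσ'⟩ := reloc_mem_range hcard σ x0 z hz1 (by rw [hσ]; exact hz2)
          exact ⟨σ', Finset.mem_univ _, by rw [hσ', hσ, hρdef]⟩
        -- two violations
        have hmemp : p ∈ Vv ρ := by
          rw [hVv]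
          simp only [Finset.mem_filter, Finset.mem_univ, true_and]
          rw [hρp, hfull x0]
          intro hc
          apply hx0
          rw [hc, ← hp, hfull p]
        have hsecond : z ∈ Vv ρ ∨ x0 ∈ Vv ρ := by
          by_contra hc
          push_neg at hc
          obtain ⟨hcz, hcx⟩ := hc
          rw [hVv] at hcz hcx
          simp only [Finset.mem_filter, Finset.mem_univ, true_and, not_not] at hcz hcx
          rw [hρz] at hcz
          rw [hρx] at hcx
          apply hx0
          rw [← hcx, hfull z, ← hcz]
        have hcard2 : 2 ≤ (Vv ρ).card := by
          rcases hsecond with hw | hw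
          · exact Finset.one_lt_card.2 ⟨p, hmemp, z, hw, hzp.symm⟩
          · exact Finset.one_lt_card.2 ⟨p, hmemp, x0, hw, hpx0⟩
        rw [hPR, Finset.mem_filter]
        exact ⟨hρRng, hcard2⟩
      -- injectivity
      have hinj : ∀ π ∈ Pf, ∀ z ∈ Finset.univ \ {x0, π⁻¹ x0},
          ∀ π' ∈ Pf, ∀ z' ∈ Finset.univ \ {x0, π'⁻¹ x0},
          reloc π x0 z = reloc π' x0 z' → π = π' ∧ z = z' := by
        intro π hπ z hz π' hπ' z' hz' heq
        obtain ⟨hz1, hz2⟩ := hvalid π hπ z hz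
        obtain ⟨hz1', hz2'⟩ := hvalid π' hπ' z' hz'
        have hfree := hfixR π (hPfRng π hπ)
        have hfree' := hfixR π' (hPfRng π' hπ')
        have hfull := hful π hπ
        have hfull' := hful π' hπ'
        set p := π⁻¹ x0 with hpdef
        set p' := π'⁻¹ x0 with hpdef'
        have hp : π p = x0 := by simp [hpdef]
        have hp' : π' p' = x0 := by simp [hpdef']
        have hpx0 : p ≠ x0 := fun hc => hfree x0 (by rw [← hc, hp, hc])
        have hpx0' : p' ≠ x0 := fun hc => hfree' x0 (by rw [← hc, hp', hc])
        have hzp : z ≠ p := fun hc => hz2 (by rw [hc, hp])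
        have hzp' : z' ≠ p' := fun hc => hz2' (by rw [hc, hp'])
        -- compute z from ρ
        have hρz : (reloc π x0 z) z = x0 := by
          rw [reloc, ← hpdef, Equiv.Perm.mul_apply, Equiv.Perm.mul_apply,
              Equiv.swap_apply_right, Equiv.swap_apply_right, hp]
        have hρz' : (reloc π' x0 z') z' = x0 := by
          rw [reloc, ← hpdef', Equiv.Perm.mul_apply, Equiv.Perm.mul_apply,
              Equiv.swap_apply_right, Equiv.swap_apply_right, hp']
        have hzz : z = z' := by
          apply (reloc π x0 z).injective
          rw [hρz, heq, hρz']
        subst hzz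
        -- now show p = p'
        by_cases hpp : p = p'
        · have hc3eq : Equiv.swap (π⁻¹ x0) x0 * Equiv.swap x0 z
              = Equiv.swap (π'⁻¹ x0) x0 * Equiv.swap x0 z := by
            rw [← hpdef, ← hpdef', hpp]
          have heq2 := heq
          rw [reloc, reloc, hc3eq] at heq2
          exact ⟨mul_right_cancel heq2, rfl⟩
        · exfalso
          -- p' is not in {p, x0, z}
          have hp'x0 : p' ≠ x0 := hpx0'
          have hp'z : p' ≠ z := fun hc => hzp' hc.symm
          have hp'p : p' ≠ p := fun hc => hpp hc.symm
          -- ρ p' = π p'  (c3 fixes p')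
          have hρp'1 : (reloc π x0 z) p' = π p' := by
            rw [reloc, ← hpdef, Equiv.Perm.mul_apply, Equiv.Perm.mul_apply,
                Equiv.swap_apply_of_ne_of_ne hp'x0 hp'z,
                Equiv.swap_apply_of_ne_of_ne hp'p hp'x0]
          -- ρ p' = π' x0
          have hρp'2 : (reloc π' x0 z) p' = π' x0 := by
            rw [reloc, ← hpdef', Equiv.Perm.mul_apply, Equiv.Perm.mul_apply,
                Equiv.swap_apply_of_ne_of_ne hp'x0 hp'z, Equiv.swap_apply_left]
          have he : π p' = π' x0 := by rw [← hρp'1, heq, hρp'2]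
          apply hx0
          have e1 : G (π p') = F p' := hfull p'
          have e2 : G (π' x0) = F x0 := hfull' x0
          have e3 : F p' = G x0 := by rw [← hp', hfull' p']
          rw [← e2, ← he, e1, e3]
      -- assemble the bound via a biUnion
      set PD : Finset (Equiv.Perm S) :=
        Pf.biUnion (fun π => (Finset.univ \ {x0, π⁻¹ x0}).image (fun z => reloc π x0 z))
        with hPD
      have hPDsub : PD ⊆ PR := by
        intro ρ hρ
        rw [hPD, Finset.mem_biUnion] at hρ
        obtain ⟨π, hπ, hρ⟩ := hρ
        rw [Finset.mem_image] at hρ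
        obtain ⟨z, hzmem, rfl⟩ := hρ
        exact hrelocPR π hπ z hzmem
      have hPDcard : PD.card = Pf.card * (n - 2) := by
        rw [hPD, Finset.card_biUnion]
        · rw [Finset.sum_congr rfl (fun π hπ => ?_), Finset.sum_const, smul_eq_mul]
          rw [Finset.card_image_of_injOn, Finset.card_sdiff_of_subset (Finset.subset_univ _),
              Finset.card_univ, hcard]
          · congr 1
            rw [Finset.card_insert_of_notMem, Finset.card_singleton]
            rw [Finset.mem_singleton]
            intro hc
            have hfree := hfixR π (hPfRng π hπ)
            exact hfree x0 (by nth_rewrite 1 [hc]; simp)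
          · intro z hzm z' hzm' he
            simp only [Finset.mem_coe] at hzm hzm'
            exact ((hinj π hπ z hzm π hπ z' hzm' he).2)
        · intro π hπ π' hπ' hne
          simp only [Function.onFun]
          rw [Finset.disjoint_left]
          intro ρ h1 h2
          rw [Finset.mem_image] at h1 h2
          obtain ⟨z, hzm, rfl⟩ := h1
          obtain ⟨z', hzm', he⟩ := h2
          exact hne ((hinj π' hπ' z' hzm' π hπ z hzm he).1).symm
      calc (n - 2) * Pf.card = PD.card := by rw [hPDcard, Nat.mul_comm]
        _ ≤ PR.card := Finset.card_le_card hPDsub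
  -- final arithmetic in ℕ
  have hmain : (n - 1) * OO.card ≤ Fintype.card (Fin n ≃ S) := by
    obtain ⟨m, rfl⟩ : ∃ m, n = m + 2 := ⟨n - 2, by omega⟩
    have h1 : OO.card ≤ (m + 2) * Pf.card + P1.card := by omega
    have h2 : m * Pf.card ≤ PR.card := by simpa using hkey
    calc (m + 2 - 1) * OO.card = (m + 1) * OO.card := by norm_num
      _ ≤ (m + 1) * ((m + 2) * Pf.card + P1.card) := Nat.mul_le_mul_left _ h1
      _ = (m + 2) * (Pf.card + m * Pf.card) + (m + 1) * P1.card := by ring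
      _ ≤ (m + 2) * (Pf.card + PR.card) + (m + 2) * P1.card := by
          apply Nat.add_le_add
          · exact Nat.mul_le_mul_left _ (Nat.add_le_add_left h2 _)
          · exact Nat.mul_le_mul_right _ (by omega)
      _ = (m + 2) * (Pf.card + P1.card + PR.card) := by ring
      _ ≤ (m + 2) * Rng.card := Nat.mul_le_mul_left _ hdisjcard
      _ = Rng.card * (m + 2) := Nat.mul_comm _ _
      _ = Fintype.card (Fin (m+2) ≃ S) := htotal
  -- conclude over ℝ
  have hNpos : 0 < Fintype.card (Fin n ≃ S) := by
    apply Fintype.card_pos_iff.2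
    exact ⟨(Fintype.equivFinOfCardEq hcard).symm⟩
  rw [div_le_div_iff₀ (by exact_mod_cast hNpos) (by
    have : (2 : ℝ) ≤ (n : ℝ) := by exact_mod_cast hn
    linarith)]
  rw [one_mul]
  have hcast : ((n : ℝ) - 1) = ((n - 1 : ℕ) : ℝ) := by
    have : (1 : ℕ) ≤ n := by omega
    push_cast [this]
    ring
  rw [hcast, ← Nat.cast_mul]
  exact_mod_cast (by rw [Nat.mul_comm] at hmain; exact_mod_cast hmain)
end

section
/- Let G = (V, E) be a finite directed multigraph with n edges in which every vertex has out-degree equal to in-degree, and suppose the out-degrees are not all concentrated at one vertex (i.e., every vertex has out-degree at most n-1). Then the number of Eulerian circuits of G (as edge sequences up to choice of starting edge, i.e., circuits with a fixed starting edge) is at most (n-2)!. -/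
open scoped Classical

private def idxMap (n p : ℕ) (i : Fin (n - 2)) : Fin n :=
  ⟨if (i : ℕ) + 1 < p then (i : ℕ) + 1 else (i : ℕ) + 2, by
    have := i.isLt; split <;> omega⟩

private theorem key {V E : Type*} [Fintype V] [Fintype E]
    (src rng : E → V) (n : ℕ) (hn : 2 ≤ n) (hcard : Fintype.card E = n)
    (hbal : ∀ v : V,
      (Finset.univ.filter (fun e => src e = v)).card =
      (Finset.univ.filter (fun e => rng e = v)).card)
    (hdeg : ∀ v : V, (Finset.univ.filter (fun e => src e = v)).card ≤ n - 1)
    (e₀ : E) (T : Finset (Fin n ≃ E))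
    (hT : ∀ σ ∈ T, σ ⟨0, Nat.lt_of_lt_of_le Nat.zero_lt_two hn⟩ = e₀ ∧
      ∀ i j : Fin n, (j : ℕ) = ((i : ℕ) + 1) % n → rng (σ i) = src (σ j)) :
    T.card ≤ Nat.factorial (n - 2) := by
  classical
  by_cases hex : ∃ f : E, f ≠ e₀ ∧ src f ≠ rng f
  · obtain ⟨f, hfe, hfl⟩ := hex
    -- position of f is ≥ 1
    have hp1 : ∀ σ : Fin n ≃ E, σ ∈ T → 1 ≤ ((σ.symm f : Fin n) : ℕ) := by
      intro σ hσ
      by_contra h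
      have h0 : (σ.symm f : Fin n) = ⟨0, by omega⟩ := Fin.ext (by simp only [Fin.val_mk]; omega)
      have h1 : σ (σ.symm f) = f := σ.apply_symm_apply f
      rw [h0, (hT σ hσ).1] at h1
      exact hfe h1.symm
    have hvals : ∀ σ : Fin n ≃ E, σ ∈ T → ∀ i : Fin (n - 2),
        σ (idxMap n ((σ.symm f : Fin n) : ℕ) i) ≠ e₀ ∧
        σ (idxMap n ((σ.symm f : Fin n) : ℕ) i) ≠ f := by
      intro σ hσ i
      constructor
      · intro h
        have h2 : idxMap n ((σ.symm f : Fin n) : ℕ) i = ⟨0, by omega⟩ :=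
          σ.injective (h.trans (hT σ hσ).1.symm)
        have h3 := congrArg Fin.val h2
        simp only [idxMap, Fin.val_mk] at h3
        split at h3 <;> omega
      · intro h
        have h2 : idxMap n ((σ.symm f : Fin n) : ℕ) i = σ.symm f := by
          apply σ.injective; rw [h, σ.apply_symm_apply]
        have h3 := congrArg Fin.val h2
        simp only [idxMap, Fin.val_mk] at h3
        split at h3 <;> omega
    have hinj1 : ∀ (σ : Fin n ≃ E) (p : ℕ) (i i' : Fin (n - 2)),
        σ (idxMap n p i) = σ (idxMap n p i') → i = i' := by
      intro σ p i i' h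
      have h2 := congrArg Fin.val (σ.injective h)
      simp only [idxMap, Fin.val_mk] at h2
      apply Fin.ext
      split_ifs at h2 <;> omega
    -- asymmetric contradiction : same deleted sequence, strictly smaller position ⇒ f loop
    have hasym : ∀ σ ∈ T, ∀ σ' ∈ T,
        (∀ i : Fin (n - 2), σ (idxMap n ((σ.symm f : Fin n) : ℕ) i)
          = σ' (idxMap n ((σ'.symm f : Fin n) : ℕ) i)) →
        ((σ.symm f : Fin n) : ℕ) < ((σ'.symm f : Fin n) : ℕ) → False := by
      intro σ hσ σ' hσ' hΦ hlt
      obtain ⟨h0, hch⟩ := hT σ hσ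
      obtain ⟨h0', hch'⟩ := hT σ' hσ'
      have hpn : ((σ.symm f : Fin n) : ℕ) < n := (σ.symm f).isLt
      have hp'n : ((σ'.symm f : Fin n) : ℕ) < n := (σ'.symm f).isLt
      have hpp : 1 ≤ ((σ.symm f : Fin n) : ℕ) := hp1 σ hσ
      set p := ((σ.symm f : Fin n) : ℕ) with hp
      set p' := ((σ'.symm f : Fin n) : ℕ) with hp'
      have hm1 : p - 1 < n := by omega
      have hm2 : p + 1 < n := by omega
      have hm3 : p < n := hpn
      -- A1 : previous edges agree
      have hA1 : σ' ⟨p - 1, hm1⟩ = σ ⟨p - 1, hm1⟩ := by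
        rcases Nat.eq_or_lt_of_le hpp with h1 | h1
        · have e0 : (⟨p - 1, hm1⟩ : Fin n) = ⟨0, by omega⟩ := Fin.ext (by simp only [Fin.val_mk]; omega)
          rw [e0, h0, h0']
        · have hi : p - 2 < n - 2 := by omega
          have hΦi := hΦ ⟨p - 2, hi⟩
          have e1 : idxMap n p ⟨p - 2, hi⟩ = ⟨p - 1, hm1⟩ := by
            apply Fin.ext; simp only [idxMap, Fin.val_mk]; split <;> omega
          have e2 : idxMap n p' ⟨p - 2, hi⟩ = ⟨p - 1, hm1⟩ := by
            apply Fin.ext; simp only [idxMap, Fin.val_mk]; split <;> omega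
          rw [e1, e2] at hΦi
          exact hΦi.symm
      -- A2 : σ' at p equals σ at p+1
      have hi2 : p - 1 < n - 2 := by omega
      have hA2 : σ' ⟨p, hm3⟩ = σ ⟨p + 1, hm2⟩ := by
        have hΦi := hΦ ⟨p - 1, hi2⟩
        have e1 : idxMap n p ⟨p - 1, hi2⟩ = ⟨p + 1, hm2⟩ := by
          apply Fin.ext; simp only [idxMap, Fin.val_mk]; split <;> omega
        have e2 : idxMap n p' ⟨p - 1, hi2⟩ = ⟨p, hm3⟩ := by
          apply Fin.ext; simp only [idxMap, Fin.val_mk]; split <;> omega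
        rw [e1, e2] at hΦi
        exact hΦi.symm
      have hPf : (⟨p, hm3⟩ : Fin n) = σ.symm f := Fin.ext hp
      have k1 : rng (σ ⟨p - 1, hm1⟩) = src f := by
        have := hch ⟨p - 1, hm1⟩ ⟨p, hm3⟩ (by
          simp only [Fin.val_mk]; rw [Nat.mod_eq_of_lt (show p - 1 + 1 < n by omega)]; omega)
        rwa [hPf, σ.apply_symm_apply] at this
      have k2 : rng f = src (σ ⟨p + 1, hm2⟩) := by
        have := hch ⟨p, hm3⟩ ⟨p + 1, hm2⟩ (by
          simp only [Fin.val_mk]; rw [Nat.mod_eq_of_lt hm2])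
        rwa [hPf, σ.apply_symm_apply] at this
      have k3 : rng (σ' ⟨p - 1, hm1⟩) = src (σ' ⟨p, hm3⟩) := by
        apply hch' ⟨p - 1, hm1⟩ ⟨p, hm3⟩
        simp only [Fin.val_mk]; rw [Nat.mod_eq_of_lt (show p - 1 + 1 < n by omega)]; omega
      apply hfl
      rw [← k1, ← hA1, k3, hA2, ← k2]
    -- equal positions ⇒ equal circuits
    have heqc : ∀ σ ∈ T, ∀ σ' ∈ T,
        (∀ i : Fin (n - 2), σ (idxMap n ((σ.symm f : Fin n) : ℕ) i)
          = σ' (idxMap n ((σ'.symm f : Fin n) : ℕ) i)) →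
        ((σ.symm f : Fin n) : ℕ) = ((σ'.symm f : Fin n) : ℕ) → σ = σ' := by
      intro σ hσ σ' hσ' hΦ hpp'
      obtain ⟨h0, _⟩ := hT σ hσ
      obtain ⟨h0', _⟩ := hT σ' hσ'
      have hpn : ((σ.symm f : Fin n) : ℕ) < n := (σ.symm f).isLt
      have hpp : 1 ≤ ((σ.symm f : Fin n) : ℕ) := hp1 σ hσ
      set p := ((σ.symm f : Fin n) : ℕ) with hp
      set p' := ((σ'.symm f : Fin n) : ℕ) with hp'
      apply Equiv.ext
      rintro ⟨x, hx⟩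
      by_cases hx0 : x = 0
      · subst hx0
        exact h0.trans h0'.symm
      · by_cases hxp : x = p
        · have e1 : (⟨x, hx⟩ : Fin n) = σ.symm f := Fin.ext (by simp only [Fin.val_mk]; omega)
          have e2 : (⟨x, hx⟩ : Fin n) = σ'.symm f := Fin.ext (by simp only [Fin.val_mk]; omega)
          have l1 : σ ⟨x, hx⟩ = f := by rw [e1]; exact σ.apply_symm_apply f
          have l2 : σ' ⟨x, hx⟩ = f := by rw [e2]; exact σ'.apply_symm_apply f
          exact l1.trans l2.symm
        · rcases lt_or_gt_of_ne (fun h => hxp h) with hlt | hgt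
          · have hi : x - 1 < n - 2 := by omega
            have hΦi := hΦ ⟨x - 1, hi⟩
            have e1 : idxMap n p ⟨x - 1, hi⟩ = ⟨x, hx⟩ := by
              apply Fin.ext; simp only [idxMap, Fin.val_mk]; split <;> omega
            have e2 : idxMap n p' ⟨x - 1, hi⟩ = ⟨x, hx⟩ := by
              apply Fin.ext; simp only [idxMap, Fin.val_mk]; split <;> omega
            rwa [e1, e2] at hΦi
          · have hi : x - 2 < n - 2 := by omega
            have hΦi := hΦ ⟨x - 2, hi⟩
            have e1 : idxMap n p ⟨x - 2, hi⟩ = ⟨x, hx⟩ := by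
              apply Fin.ext; simp only [idxMap, Fin.val_mk]; split <;> omega
            have e2 : idxMap n p' ⟨x - 2, hi⟩ = ⟨x, hx⟩ := by
              apply Fin.ext; simp only [idxMap, Fin.val_mk]; split <;> omega
            rwa [e1, e2] at hΦi
    have hsub : Fintype.card {x : E // x ≠ e₀ ∧ x ≠ f} = n - 2 := by
      have h1 : Fintype.card {x : E // x ≠ e₀ ∧ x ≠ f}
          = (Finset.univ.filter (fun x : E => x ≠ e₀ ∧ x ≠ f)).card :=
        Fintype.card_subtype _
      have h2 : Finset.univ.filter (fun x : E => x ≠ e₀ ∧ x ≠ f)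
          = Finset.univ \ {e₀, f} := by
        ext x; simp [not_or]
      rw [h1, h2, Finset.card_sdiff_of_subset (Finset.subset_univ _), Finset.card_univ, hcard,
        Finset.card_pair (Ne.symm hfe)]
    calc T.card = Fintype.card {x // x ∈ T} := (Fintype.card_coe T).symm
      _ ≤ Fintype.card (Fin (n - 2) ↪ {x : E // x ≠ e₀ ∧ x ≠ f}) := by
          apply Fintype.card_le_of_injective
            (fun σT : {x // x ∈ T} =>
              (⟨fun i => ⟨σT.1 (idxMap n ((σT.1.symm f : Fin n) : ℕ) i),
                  (hvals σT.1 σT.2 i).1, (hvals σT.1 σT.2 i).2⟩,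
                fun i i' h => hinj1 σT.1 _ i i' (Subtype.ext_iff.mp h)⟩ :
                Fin (n - 2) ↪ {x : E // x ≠ e₀ ∧ x ≠ f}))
          rintro ⟨σ, hσ⟩ ⟨σ', hσ'⟩ h
          have hΦ : ∀ i : Fin (n - 2), σ (idxMap n ((σ.symm f : Fin n) : ℕ) i)
              = σ' (idxMap n ((σ'.symm f : Fin n) : ℕ) i) := by
            intro i
            exact Subtype.ext_iff.mp (DFunLike.congr_fun h i)
          apply Subtype.ext
          rcases lt_trichotomy ((σ.symm f : Fin n) : ℕ) ((σ'.symm f : Fin n) : ℕ)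
            with hlt | heq | hgt
          · exact absurd (hasym σ hσ σ' hσ' hΦ hlt) (fun h => h)
          · exact heqc σ hσ σ' hσ' hΦ heq
          · exact absurd (hasym σ' hσ' σ hσ (fun i => (hΦ i).symm) hgt) (fun h => h)
      _ = Nat.factorial (n - 2) := by
          rw [Fintype.card_embedding_eq, Fintype.card_fin, hsub, Nat.descFactorial_self]
  · push_neg at hex
    by_cases he : src e₀ = rng e₀
    · have hall : ∀ e : E, src e = rng e := by
        intro e
        by_cases h : e = e₀
        · rw [h]; exact he
        · exact hex e h
      have hTempty : T = ∅ := by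
        rw [Finset.eq_empty_iff_forall_notMem]
        intro σ hσ
        obtain ⟨h0, hch⟩ := hT σ hσ
        have hsrc : ∀ m : ℕ, ∀ hm : m < n, src (σ ⟨m, hm⟩) = src e₀ := by
          intro m
          induction m with
          | zero => intro hm; exact congrArg src h0
          | succ m ih =>
            intro hm
            have hm' : m < n := by omega
            have hc := hch ⟨m, hm'⟩ ⟨m + 1, hm⟩ (by
              simp only [Fin.val_mk]; rw [Nat.mod_eq_of_lt hm])
            rw [← hc, ← hall, ih hm']
        have huniv : Finset.univ.filter (fun e => src e = src e₀) = Finset.univ := by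
          ext e
          simp only [Finset.mem_filter, Finset.mem_univ, true_and, iff_true]
          have h1 : σ (σ.symm e) = e := σ.apply_symm_apply e
          have h2 := hsrc ((σ.symm e) : ℕ) (σ.symm e).isLt
          rw [show (⟨((σ.symm e) : ℕ), (σ.symm e).isLt⟩ : Fin n) = σ.symm e from Fin.ext rfl,
            h1] at h2
          exact h2
        have hd := hdeg (src e₀)
        rw [huniv, Finset.card_univ, hcard] at hd
        omega
      rw [hTempty]
      simp
    · exfalso
      have hb := hbal (src e₀)
      have hsubset : Finset.univ.filter (fun e => rng e = src e₀) ⊆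
          (Finset.univ.filter (fun e => src e = src e₀)).erase e₀ := by
        intro e hmem
        simp only [Finset.mem_filter, Finset.mem_univ, true_and] at hmem
        have hne : e ≠ e₀ := by
          intro h; subst h; exact he hmem.symm
        rw [Finset.mem_erase]
        refine ⟨hne, ?_⟩
        simp only [Finset.mem_filter, Finset.mem_univ, true_and]
        rw [hex e hne, hmem]
      have h1 := Finset.card_le_card hsubset
      have h2 : e₀ ∈ Finset.univ.filter (fun e => src e = src e₀) := by simp
      rw [Finset.card_erase_of_mem h2] at h1
      have h3 : 1 ≤ (Finset.univ.filter (fun e => src e = src e₀)).card :=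
        Finset.card_pos.mpr ⟨e₀, h2⟩
      omega

/-- In a finite directed multigraph with `n` edges in which every vertex has out-degree
equal to in-degree and every out-degree is at most `n - 1`, the number of Eulerian
circuits with a fixed starting edge `e₀` is at most `(n-2)!`. -/
theorem stmt_1 {V E : Type*} [Fintype V] [Fintype E]
    (src rng : E → V) (n : ℕ) (hn : 2 ≤ n) (hcard : Fintype.card E = n)
    (hbal : ∀ v : V,
      (Finset.univ.filter (fun e => src e = v)).card =
      (Finset.univ.filter (fun e => rng e = v)).card)
    (hdeg : ∀ v : V, (Finset.univ.filter (fun e => src e = v)).card ≤ n - 1)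
    (e₀ : E) :
    (Finset.univ.filter (fun σ : Fin n ≃ E =>
        σ ⟨0, by omega⟩ = e₀ ∧ ∀ i j : Fin n, (j : ℕ) = ((i : ℕ) + 1) % n → rng (σ i) = src (σ j))).card
      ≤ Nat.factorial (n - 2) := by
  classical
  exact key src rng n hn hcard hbal hdeg e₀ _
    (fun σ hσ => (Finset.mem_filter.mp hσ).2)
end

section
/- In the Wright-Fisher model with population sizes (M_n), if ∑_{n≥1} 1/M_n = ∞, then almost surely the proportion process Y_n converges to a random variable Y_∞ taking values in {0,1} almost surely (i.e., fixation occurs almost surely). -/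
open MeasureTheory ProbabilityTheory Filter Topology Finset

lemma wf_binom_sum (m : ℕ) (p : ℝ) :
    ∑ k ∈ range (m + 1), ((m.choose k : ℝ) * p ^ k * (1 - p) ^ (m - k)) = 1 := by
  have h : (p + (1 - p)) ^ m = 1 := by norm_num
  calc ∑ k ∈ range (m + 1), ((m.choose k : ℝ) * p ^ k * (1 - p) ^ (m - k))
      = (p + (1 - p)) ^ m := by
        rw [add_pow]; exact Finset.sum_congr rfl (fun k hk => by ring)
    _ = 1 := h

lemma wf_binom_mean (m : ℕ) (p : ℝ) :
    ∑ k ∈ range (m + 1), ((k : ℝ) * ((m.choose k : ℝ) * p ^ k * (1 - p) ^ (m - k)))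
      = m * p := by
  cases m with
  | zero => simp
  | succ n =>
    rw [Finset.sum_range_succ']
    simp only [Nat.cast_zero, zero_mul, add_zero]
    have key : ∀ j : ℕ, ((j : ℝ) + 1) * ((n + 1).choose (j + 1) : ℝ)
        = ((n : ℝ) + 1) * (n.choose j : ℝ) := by
      intro j
      have h := Nat.add_one_mul_choose_eq n j
      have h' : ((n + 1 : ℕ) : ℝ) * (n.choose j : ℝ)
          = ((n+1).choose (j+1) : ℝ) * ((j + 1 : ℕ) : ℝ) := by exact_mod_cast congrArg Nat.cast h
      push_cast at h'
      linarith
    have heq : ∀ j ∈ range (n + 1),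
        ((j + 1 : ℕ) : ℝ) * (((n+1).choose (j+1) : ℝ) * p ^ (j+1) * (1 - p) ^ (n + 1 - (j+1)))
        = ((n : ℝ) + 1) * p * ((n.choose j : ℝ) * p ^ j * (1 - p) ^ (n - j)) := by
      intro j hj
      have hsub : n + 1 - (j + 1) = n - j := by omega
      rw [hsub]
      have : (((j:ℕ) + 1 : ℕ) : ℝ) = (j : ℝ) + 1 := by push_cast; ring
      rw [this]
      calc ((j : ℝ) + 1) * (((n+1).choose (j+1) : ℝ) * p ^ (j+1) * (1 - p) ^ (n - j))
          = (((j : ℝ) + 1) * ((n+1).choose (j+1) : ℝ)) * p ^ (j+1) * (1 - p) ^ (n - j) := by ring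
        _ = (((n : ℝ) + 1) * (n.choose j : ℝ)) * p ^ (j+1) * (1 - p) ^ (n - j) := by rw [key j]
        _ = ((n : ℝ) + 1) * p * ((n.choose j : ℝ) * p ^ j * (1 - p) ^ (n - j)) := by ring
    rw [Finset.sum_congr rfl heq, ← Finset.mul_sum, wf_binom_sum n p]
    push_cast
    ring

lemma wf_binom_fac2 (m : ℕ) (p : ℝ) :
    ∑ k ∈ range (m + 1), ((k : ℝ) * ((k : ℝ) - 1) * ((m.choose k : ℝ) * p ^ k * (1 - p) ^ (m - k)))
      = m * ((m : ℝ) - 1) * p ^ 2 := by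
  match m with
  | 0 => simp
  | 1 => norm_num [Finset.sum_range_succ]
  | (n + 2) =>
    rw [Finset.sum_range_succ', Finset.sum_range_succ']
    simp only [Nat.cast_zero, Nat.cast_one]
    norm_num
    have key : ∀ j : ℕ, ((j : ℝ) + 2) * ((j : ℝ) + 1) * ((n + 2).choose (j + 2) : ℝ)
        = ((n : ℝ) + 2) * ((n : ℝ) + 1) * (n.choose j : ℝ) := by
      intro j
      have h1 := Nat.add_one_mul_choose_eq (n + 1) (j + 1)
      have h2 := Nat.add_one_mul_choose_eq n j
      have h1' : ((n : ℝ) + 2) * ((n + 1).choose (j + 1) : ℝ)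
          = ((n + 2).choose (j + 2) : ℝ) * ((j : ℝ) + 2) := by exact_mod_cast h1
      have h2' : ((n : ℝ) + 1) * (n.choose j : ℝ)
          = ((n + 1).choose (j + 1) : ℝ) * ((j : ℝ) + 1) := by exact_mod_cast h2
      nlinarith [h1', h2']
    have heq : ∀ j ∈ range (n + 1),
        ((j : ℝ) + 1 + 1) * ((j : ℝ) + 1) *
          (((n + 2).choose (j + 1 + 1) : ℝ) * p ^ (j + 1 + 1) * (1 - p) ^ (n + 2 - (j + 1 + 1)))
        = ((n : ℝ) + 2) * ((n : ℝ) + 1) * p ^ 2 *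
            ((n.choose j : ℝ) * p ^ j * (1 - p) ^ (n - j)) := by
      intro j hj
      have hsub : n + 2 - (j + 1 + 1) = n - j := by omega
      have hjj : j + 1 + 1 = j + 2 := by omega
      rw [hsub, hjj]
      calc ((j : ℝ) + 1 + 1) * ((j : ℝ) + 1) *
            (((n + 2).choose (j + 2) : ℝ) * p ^ (j + 2) * (1 - p) ^ (n - j))
          = (((j : ℝ) + 2) * ((j : ℝ) + 1) * ((n + 2).choose (j + 2) : ℝ)) * p ^ (j + 2)
              * (1 - p) ^ (n - j) := by ring
        _ = (((n : ℝ) + 2) * ((n : ℝ) + 1) * (n.choose j : ℝ)) * p ^ (j + 2)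
              * (1 - p) ^ (n - j) := by rw [key j]
        _ = ((n : ℝ) + 2) * ((n : ℝ) + 1) * p ^ 2 *
              ((n.choose j : ℝ) * p ^ j * (1 - p) ^ (n - j)) := by ring
    rw [Finset.sum_congr rfl heq, ← Finset.mul_sum, wf_binom_sum n p]
    ring

lemma wf_binom_mean' (m : ℕ) (hm : 0 < m) (p : ℝ) :
    ∑ k ∈ range (m + 1), ((k : ℝ) / m * ((m.choose k : ℝ) * p ^ k * (1 - p) ^ (m - k))) = p := by
  have hm' : (m : ℝ) ≠ 0 := Nat.cast_ne_zero.mpr hm.ne'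
  have hsplit : ∀ k ∈ range (m + 1),
      (k : ℝ) / m * ((m.choose k : ℝ) * p ^ k * (1 - p) ^ (m - k))
      = (1 / (m : ℝ)) * ((k : ℝ) * ((m.choose k : ℝ) * p ^ k * (1 - p) ^ (m - k))) := by
    intro k _; ring
  rw [Finset.sum_congr rfl hsplit, ← Finset.mul_sum, wf_binom_mean]
  field_simp

lemma wf_binom_var (m : ℕ) (hm : 0 < m) (p : ℝ) :
    ∑ k ∈ range (m + 1),
        ((k : ℝ) / m * (1 - (k : ℝ) / m) * ((m.choose k : ℝ) * p ^ k * (1 - p) ^ (m - k)))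
      = (1 - 1 / (m : ℝ)) * (p * (1 - p)) := by
  have hm' : (m : ℝ) ≠ 0 := Nat.cast_ne_zero.mpr hm.ne'
  have hsplit : ∀ k ∈ range (m + 1),
      (k : ℝ) / m * (1 - (k : ℝ) / m) * ((m.choose k : ℝ) * p ^ k * (1 - p) ^ (m - k))
      = (1 / (m : ℝ)) * ((k : ℝ) * ((m.choose k : ℝ) * p ^ k * (1 - p) ^ (m - k)))
        - (1 / (m : ℝ) ^ 2) * ((k : ℝ) * ((k : ℝ) - 1) * ((m.choose k : ℝ) * p ^ k * (1 - p) ^ (m - k)))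
        - (1 / (m : ℝ) ^ 2) * ((k : ℝ) * ((m.choose k : ℝ) * p ^ k * (1 - p) ^ (m - k))) := by
    intro k _; ring
  rw [Finset.sum_congr rfl hsplit, Finset.sum_sub_distrib, Finset.sum_sub_distrib,
    ← Finset.mul_sum, ← Finset.mul_sum, ← Finset.mul_sum, wf_binom_mean, wf_binom_fac2]
  field_simp
  ring

/-- Wright-Fisher model with `∑ 1/M n = ∞` (i.e. `1/M n` not summable): almost surely
the proportion process `Y n` converges to a limit `Y∞` taking only the values 0 or 1
(fixation occurs almost surely). -/
theorem stmt_6 {Ω : Type*} [m0 : MeasurableSpace Ω] (μ : Measure Ω)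
    [IsProbabilityMeasure μ] (F : Filtration ℕ m0)
    (M : ℕ → ℕ) (hM : ∀ n, 0 < M n)
    (hdiv : ¬ Summable (fun n => 1 / (M n : ℝ)))
    (Y : ℕ → Ω → ℝ)
    (hadapt : Adapted F Y)
    (hmeas : ∀ n, Measurable (Y n))
    (hrange : ∀ n, ∀ ω, Y n ω ∈ Set.Icc (0 : ℝ) 1)
    (hint : ∀ n, ∀ ω, ∃ k : ℕ, k ≤ M n ∧ Y n ω = (k : ℝ) / M n)
    (hbin : ∀ n, ∀ k : ℕ, k ≤ M (n + 1) →
      μ[Set.indicator {ω | Y (n + 1) ω * M (n + 1) = (k : ℝ)} (fun _ => (1 : ℝ)) | F n]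
        =ᵐ[μ] fun ω =>
          ((M (n + 1)).choose k : ℝ) * Y n ω ^ k * (1 - Y n ω) ^ (M (n + 1) - k)) :
    ∃ Yinf : Ω → ℝ, ∀ᵐ ω ∂μ,
      Tendsto (fun n => Y n ω) atTop (𝓝 (Yinf ω)) ∧ (Yinf ω = 0 ∨ Yinf ω = 1) := by
  have hMne : ∀ n, ((M n : ℝ)) ≠ 0 := fun n => Nat.cast_ne_zero.mpr (hM n).ne'
  -- measurability of the level sets
  have hSmeas : ∀ n (k : ℕ),
      MeasurableSet {ω | Y (n + 1) ω * (M (n + 1) : ℝ) = (k : ℝ)} :=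
    fun n k => ((hmeas (n + 1)).mul_const _) (measurableSet_singleton ((k : ℝ)))
  -- pointwise decomposition of f ∘ Y (n+1)
  have hdecomp : ∀ (n : ℕ) (f : ℝ → ℝ) (ω : Ω),
      f (Y (n + 1) ω) = ∑ k ∈ range (M (n + 1) + 1),
        f ((k : ℝ) / (M (n + 1) : ℝ)) *
          Set.indicator {ω' | Y (n + 1) ω' * (M (n + 1) : ℝ) = (k : ℝ)} (fun _ => (1 : ℝ)) ω := by
    intro n f ω
    obtain ⟨k0, hk0le, hk0⟩ := hint (n + 1) ω
    have hmem : Y (n + 1) ω * (M (n + 1) : ℝ) = (k0 : ℝ) := by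
      rw [hk0, div_mul_cancel₀ _ (hMne (n + 1))]
    have hmem' : ω ∈ {ω' | Y (n + 1) ω' * (M (n + 1) : ℝ) = (k0 : ℝ)} := hmem
    rw [Finset.sum_eq_single k0]
    · rw [Set.indicator_of_mem hmem', hk0, mul_one]
    · intro k hk hne
      rw [Set.indicator_of_notMem, mul_zero]
      intro hkmem
      have hkk : (k0 : ℝ) = (k : ℝ) := by
        have : Y (n + 1) ω * (M (n + 1) : ℝ) = (k : ℝ) := hkmem
        rw [hmem] at this; exact this
      exact hne (Nat.cast_injective hkk).symm
    · intro h
      exact absurd (Finset.mem_range.mpr (Nat.lt_succ_of_le hk0le)) h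
  -- conditional expectation of f ∘ Y (n+1)
  have hcond : ∀ (n : ℕ) (f : ℝ → ℝ),
      μ[fun ω => f (Y (n + 1) ω) | F n] =ᵐ[μ]
        fun ω => ∑ k ∈ range (M (n + 1) + 1),
          f ((k : ℝ) / (M (n + 1) : ℝ)) *
            (((M (n + 1)).choose k : ℝ) * Y n ω ^ k * (1 - Y n ω) ^ (M (n + 1) - k)) := by
    intro n f
    have hfun : (fun ω => f (Y (n + 1) ω))
        = ∑ k ∈ range (M (n + 1) + 1),
            (f ((k : ℝ) / (M (n + 1) : ℝ)) •
              Set.indicator {ω' | Y (n + 1) ω' * (M (n + 1) : ℝ) = (k : ℝ)} (fun _ => (1 : ℝ))) := by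
      funext ω
      rw [Finset.sum_apply]
      simpa [smul_eq_mul] using hdecomp n f ω
    rw [hfun]
    have hint_k : ∀ k ∈ range (M (n + 1) + 1),
        Integrable (f ((k : ℝ) / (M (n + 1) : ℝ)) •
          Set.indicator {ω' | Y (n + 1) ω' * (M (n + 1) : ℝ) = (k : ℝ)} (fun _ => (1 : ℝ))) μ :=
      fun k _ => ((integrable_const (1 : ℝ)).indicator (hSmeas n k)).smul _
    refine (condExp_finsetSum hint_k (F n)).trans ?_
    have step1 : (∑ k ∈ range (M (n + 1) + 1),
          μ[f ((k : ℝ) / (M (n + 1) : ℝ)) •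
            Set.indicator {ω' | Y (n + 1) ω' * (M (n + 1) : ℝ) = (k : ℝ)} (fun _ => (1 : ℝ)) | F n])
        =ᵐ[μ] ∑ k ∈ range (M (n + 1) + 1),
          (f ((k : ℝ) / (M (n + 1) : ℝ)) •
            μ[Set.indicator {ω' | Y (n + 1) ω' * (M (n + 1) : ℝ) = (k : ℝ)} (fun _ => (1 : ℝ)) | F n]) :=
      eventuallyEq_sum fun k _ => condExp_smul _ _ _
    refine step1.trans ?_
    have step2 : (∑ k ∈ range (M (n + 1) + 1),
          (f ((k : ℝ) / (M (n + 1) : ℝ)) •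
            μ[Set.indicator {ω' | Y (n + 1) ω' * (M (n + 1) : ℝ) = (k : ℝ)} (fun _ => (1 : ℝ)) | F n]))
        =ᵐ[μ] ∑ k ∈ range (M (n + 1) + 1),
          (f ((k : ℝ) / (M (n + 1) : ℝ)) •
            fun ω => ((M (n + 1)).choose k : ℝ) * Y n ω ^ k * (1 - Y n ω) ^ (M (n + 1) - k)) := by
      refine eventuallyEq_sum fun k hk => ?_
      have hb := hbin n k (Nat.lt_succ_iff.mp (Finset.mem_range.mp hk))
      exact hb.mono fun ω hω => by simp only [Pi.smul_apply, hω]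
    refine step2.trans (Filter.EventuallyEq.of_eq ?_)
    funext ω
    rw [Finset.sum_apply]
    simp [smul_eq_mul]
  -- martingale property
  have hYint : ∀ n, Integrable (Y n) μ := by
    intro n
    refine (integrable_const (1 : ℝ)).mono' (hmeas n).aestronglyMeasurable (ae_of_all _ fun ω => ?_)
    rw [Real.norm_eq_abs, abs_le]
    exact ⟨by linarith [(hrange n ω).1], (hrange n ω).2⟩
  have hmart : ∀ n, μ[Y (n + 1) | F n] =ᵐ[μ] Y n := by
    intro n
    have h := hcond n (fun x => x)
    refine h.trans (Filter.EventuallyEq.of_eq (funext fun ω => ?_))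
    exact wf_binom_mean' (M (n + 1)) (hM (n + 1)) (Y n ω)
  have hvar : ∀ n, μ[fun ω => Y (n + 1) ω * (1 - Y (n + 1) ω) | F n] =ᵐ[μ]
      fun ω => (1 - 1 / (M (n + 1) : ℝ)) * (Y n ω * (1 - Y n ω)) := by
    intro n
    have h := hcond n (fun x => x * (1 - x))
    refine h.trans (Filter.EventuallyEq.of_eq (funext fun ω => ?_))
    exact wf_binom_var (M (n + 1)) (hM (n + 1)) (Y n ω)
  -- integrability of the variance-like process
  have hZmeas : ∀ n, Measurable (fun ω => Y n ω * (1 - Y n ω)) :=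
    fun n => (hmeas n).mul ((measurable_const.sub (hmeas n)))
  have hZbd : ∀ n ω, ‖Y n ω * (1 - Y n ω)‖ ≤ 1 := by
    intro n ω
    have h1 := (hrange n ω).1
    have h2 := (hrange n ω).2
    rw [Real.norm_eq_abs, abs_le]
    constructor <;> nlinarith
  have hZint : ∀ n, Integrable (fun ω => Y n ω * (1 - Y n ω)) μ := fun n =>
    (integrable_const (1 : ℝ)).mono' (hZmeas n).aestronglyMeasurable (ae_of_all _ (hZbd n))
  -- recursion for the integrals
  have hZrec : ∀ n, ∫ ω, Y (n + 1) ω * (1 - Y (n + 1) ω) ∂μ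
      = (1 - 1 / (M (n + 1) : ℝ)) * ∫ ω, Y n ω * (1 - Y n ω) ∂μ := by
    intro n
    calc ∫ ω, Y (n + 1) ω * (1 - Y (n + 1) ω) ∂μ
        = ∫ ω, (μ[fun ω => Y (n + 1) ω * (1 - Y (n + 1) ω) | F n]) ω ∂μ :=
          (integral_condExp (F.le n)).symm
      _ = ∫ ω, (1 - 1 / (M (n + 1) : ℝ)) * (Y n ω * (1 - Y n ω)) ∂μ :=
          integral_congr_ae (hvar n)
      _ = (1 - 1 / (M (n + 1) : ℝ)) * ∫ ω, Y n ω * (1 - Y n ω) ∂μ := integral_const_mul _ _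
  have ha0 : ∀ n, (0 : ℝ) ≤ ∫ ω, Y n ω * (1 - Y n ω) ∂μ := fun n =>
    integral_nonneg fun ω => by
      show (0 : ℝ) ≤ Y n ω * (1 - Y n ω)
      nlinarith [(hrange n ω).1, (hrange n ω).2]
  have haub : ∫ ω, Y 0 ω * (1 - Y 0 ω) ∂μ ≤ 1 := by
    calc ∫ ω, Y 0 ω * (1 - Y 0 ω) ∂μ ≤ ∫ _ω, (1 : ℝ) ∂μ := by
          refine integral_mono (hZint 0) (integrable_const 1) fun ω => ?_
          have := hZbd 0 ω
          rw [Real.norm_eq_abs, abs_le] at this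
          exact this.2
      _ = 1 := by simp
  have haprod : ∀ n, ∫ ω, Y n ω * (1 - Y n ω) ∂μ
      = (∏ k ∈ range n, (1 - 1 / (M (k + 1) : ℝ))) * ∫ ω, Y 0 ω * (1 - Y 0 ω) ∂μ := by
    intro n
    induction n with
    | zero => simp
    | succ n ih =>
      rw [Finset.prod_range_succ, hZrec n, ih]
      ring
  -- divergence of the sums
  have hgnn : ∀ k : ℕ, (0 : ℝ) ≤ 1 / (M (k + 1) : ℝ) := fun k => by positivity
  have hgdiv : ¬ Summable (fun k : ℕ => 1 / (M (k + 1) : ℝ)) := by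
    intro h
    exact hdiv ((summable_nat_add_iff 1).mp h)
  have hS : Tendsto (fun n => ∑ k ∈ range n, 1 / (M (k + 1) : ℝ)) atTop atTop :=
    (not_summable_iff_tendsto_nat_atTop_of_nonneg hgnn).mp hgdiv
  -- a n ≤ exp (- S n)
  have hbound : ∀ n, ∫ ω, Y n ω * (1 - Y n ω) ∂μ ≤ Real.exp (-(∑ k ∈ range n, 1 / (M (k + 1) : ℝ))) := by
    intro n
    have hfac_nn : ∀ k ∈ range n, (0 : ℝ) ≤ 1 - 1 / (M (k + 1) : ℝ) := by
      intro k _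
      have h1 : (1 : ℝ) ≤ (M (k + 1) : ℝ) := by exact_mod_cast hM (k + 1)
      have : 1 / (M (k + 1) : ℝ) ≤ 1 := by
        rw [div_le_one (by linarith)]; exact h1
      linarith
    have hfac_le : ∀ k ∈ range n,
        1 - 1 / (M (k + 1) : ℝ) ≤ Real.exp (-(1 / (M (k + 1) : ℝ))) := by
      intro k _
      have := Real.add_one_le_exp (-(1 / (M (k + 1) : ℝ)))
      linarith
    have hprodle : (∏ k ∈ range n, (1 - 1 / (M (k + 1) : ℝ)))
        ≤ ∏ k ∈ range n, Real.exp (-(1 / (M (k + 1) : ℝ))) :=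
      Finset.prod_le_prod hfac_nn hfac_le
    have hexp : ∏ k ∈ range n, Real.exp (-(1 / (M (k + 1) : ℝ)))
        = Real.exp (-(∑ k ∈ range n, 1 / (M (k + 1) : ℝ))) := by
      rw [← Real.exp_sum, Finset.sum_neg_distrib]
    have hprod_nn : (0 : ℝ) ≤ ∏ k ∈ range n, (1 - 1 / (M (k + 1) : ℝ)) :=
      Finset.prod_nonneg hfac_nn
    calc ∫ ω, Y n ω * (1 - Y n ω) ∂μ
        = (∏ k ∈ range n, (1 - 1 / (M (k + 1) : ℝ))) * ∫ ω, Y 0 ω * (1 - Y 0 ω) ∂μ := haprod n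
      _ ≤ (∏ k ∈ range n, (1 - 1 / (M (k + 1) : ℝ))) * 1 := by
          exact mul_le_mul_of_nonneg_left haub hprod_nn
      _ = ∏ k ∈ range n, (1 - 1 / (M (k + 1) : ℝ)) := mul_one _
      _ ≤ Real.exp (-(∑ k ∈ range n, 1 / (M (k + 1) : ℝ))) := by rw [← hexp]; exact hprodle
  have hZto0 : Tendsto (fun n => ∫ ω, Y n ω * (1 - Y n ω) ∂μ) atTop (𝓝 0) :=
    squeeze_zero ha0 hbound (Real.tendsto_exp_neg_atTop_nhds_zero.comp hS)
  -- martingale convergence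
  have mart : Martingale Y F μ := martingale_nat hadapt.stronglyAdapted hYint (fun n => (hmart n).symm)
  have hL1 : ∀ n, eLpNorm (Y n) 1 μ ≤ ((1 : NNReal) : ENNReal) := by
    intro n
    have hb : ∀ᵐ ω ∂μ, ‖Y n ω‖ ≤ 1 := ae_of_all _ fun ω => by
      rw [Real.norm_eq_abs, abs_le]
      exact ⟨by linarith [(hrange n ω).1], (hrange n ω).2⟩
    have := eLpNorm_le_of_ae_bound (p := 1) (μ := μ) hb
    simpa using this
  have hconv := mart.submartingale.ae_tendsto_limitProcess hL1
  set Yinf : Ω → ℝ := Filtration.limitProcess Y F μ with hYinf_def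
  have hYinfIcc : ∀ᵐ ω ∂μ, Yinf ω ∈ Set.Icc (0 : ℝ) 1 := by
    filter_upwards [hconv] with ω hω
    exact isClosed_Icc.mem_of_tendsto hω (Eventually.of_forall fun n => hrange n ω)
  have hYinf_sm : StronglyMeasurable Yinf :=
    Filtration.stronglyMeasurable_limitProcess.mono (iSup_le fun n => F.le n)
  -- dominated convergence
  have hZconv : ∀ᵐ ω ∂μ, Tendsto (fun n => Y n ω * (1 - Y n ω)) atTop
      (𝓝 (Yinf ω * (1 - Yinf ω))) := by
    filter_upwards [hconv] with ω hω
    exact hω.mul (tendsto_const_nhds.sub hω)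
  have hlim : Tendsto (fun n => ∫ ω, Y n ω * (1 - Y n ω) ∂μ) atTop (𝓝 (∫ ω, Yinf ω * (1 - Yinf ω) ∂μ)) := by
    refine tendsto_integral_of_dominated_convergence (fun _ => (1 : ℝ))
      (fun n => (hZmeas n).aestronglyMeasurable) (integrable_const 1)
      (fun n => ae_of_all _ (hZbd n)) hZconv
  have hI0 : ∫ ω, Yinf ω * (1 - Yinf ω) ∂μ = 0 := tendsto_nhds_unique hlim hZto0
  have hZinf_sm : AEStronglyMeasurable (fun ω => Yinf ω * (1 - Yinf ω)) μ :=
    (hYinf_sm.mul (stronglyMeasurable_const.sub hYinf_sm)).aestronglyMeasurable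
  have hZinf_int : Integrable (fun ω => Yinf ω * (1 - Yinf ω)) μ := by
    refine (integrable_const (1 : ℝ)).mono' hZinf_sm ?_
    filter_upwards [hYinfIcc] with ω hω
    rw [Real.norm_eq_abs, abs_le]
    constructor <;> nlinarith [hω.1, hω.2]
  have hnn : (0 : Ω → ℝ) ≤ᵐ[μ] fun ω => Yinf ω * (1 - Yinf ω) := by
    filter_upwards [hYinfIcc] with ω hω
    simp only [Pi.zero_apply]
    nlinarith [hω.1, hω.2]
  have hfix : (fun ω => Yinf ω * (1 - Yinf ω)) =ᵐ[μ] 0 :=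
    (integral_eq_zero_iff_of_nonneg_ae hnn hZinf_int).mp hI0
  refine ⟨Yinf, ?_⟩
  filter_upwards [hconv, hfix] with ω h1 h2
  refine ⟨h1, ?_⟩
  have h2' : Yinf ω * (1 - Yinf ω) = 0 := h2
  rcases mul_eq_zero.mp h2' with h | h
  · exact Or.inl h
  · exact Or.inr (by linarith)
end

section
/- In the Wright-Fisher model with population sizes (M_n) satisfying ∑_{n≥1} 1/M_n < ∞: for every ε > 0 and η > 0 there exists l such that for every F_l-measurable [0,1]-valued random variable Y_l consistent with the process and every L > l, P(|Y_L - Y_l| ≥ η) < ε. -/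
open MeasureTheory ProbabilityTheory Finset

section Aux

lemma WF_bern_eval (n k : ℕ) (y : ℝ) :
    Polynomial.eval y (bernsteinPolynomial ℝ n k)
      = (n.choose k : ℝ) * y ^ k * (1 - y) ^ (n - k) := by
  simp [bernsteinPolynomial]

lemma WF_sum_b (n : ℕ) (y : ℝ) :
    ∑ k ∈ range (n+1), (n.choose k : ℝ) * y ^ k * (1 - y) ^ (n - k) = 1 := by
  have h := congrArg (Polynomial.eval y) (bernsteinPolynomial.sum ℝ n)
  simpa [Polynomial.eval_finset_sum, WF_bern_eval] using h

lemma WF_sum_kb (n : ℕ) (y : ℝ) :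
    ∑ k ∈ range (n+1), (k : ℝ) * ((n.choose k : ℝ) * y ^ k * (1 - y) ^ (n - k)) = n * y := by
  have h := congrArg (Polynomial.eval y) (bernsteinPolynomial.sum_smul ℝ n)
  simpa [Polynomial.eval_finset_sum, WF_bern_eval, mul_comm, mul_assoc, mul_left_comm] using h

lemma WF_sum_k2b (n : ℕ) (y : ℝ) :
    ∑ k ∈ range (n+1), (k : ℝ)^2 * ((n.choose k : ℝ) * y ^ k * (1 - y) ^ (n - k))
      = (n : ℝ) * (n - 1) * y ^ 2 + n * y := by
  have h := congrArg (Polynomial.eval y) (bernsteinPolynomial.sum_mul_smul ℝ n)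
  have h2 : ∑ k ∈ range (n+1), ((k * (k-1) : ℕ) : ℝ) * ((n.choose k : ℝ) * y ^ k * (1 - y) ^ (n - k))
      = ((n * (n-1) : ℕ) : ℝ) * y ^ 2 := by
    simpa [Polynomial.eval_finset_sum, WF_bern_eval, mul_comm, mul_assoc, mul_left_comm] using h
  have h3 : ∀ k : ℕ, (k : ℝ)^2 * ((n.choose k : ℝ) * y ^ k * (1 - y) ^ (n - k))
      = ((k * (k-1) : ℕ) : ℝ) * ((n.choose k : ℝ) * y ^ k * (1 - y) ^ (n - k))
        + (k : ℝ) * ((n.choose k : ℝ) * y ^ k * (1 - y) ^ (n - k)) := by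
    rintro (_|k) <;> push_cast <;> ring
  rw [Finset.sum_congr rfl fun k _ => h3 k, Finset.sum_add_distrib, h2, WF_sum_kb]
  rcases n with _|n
  · simp
  · push_cast; ring

lemma WF_moment {Ω : Type*} [m0 : MeasurableSpace Ω] (μ : Measure Ω)
    [IsProbabilityMeasure μ] (F : Filtration ℕ m0)
    (M : ℕ → ℕ) (hM : ∀ n, 0 < M n) (Y : ℕ → Ω → ℝ)
    (hmeas : ∀ n, Measurable (Y n))
    (hint : ∀ n, ∀ ω, ∃ k : ℕ, k ≤ M n ∧ Y n ω = (k : ℝ) / M n)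
    (hbin : ∀ n, ∀ k : ℕ, k ≤ M (n + 1) →
      μ[Set.indicator {ω | Y (n + 1) ω * M (n + 1) = (k : ℝ)} (fun _ => (1 : ℝ)) | F n]
        =ᵐ[μ] fun ω =>
          ((M (n + 1)).choose k : ℝ) * Y n ω ^ k * (1 - Y n ω) ^ (M (n + 1) - k))
    (n : ℕ) (g : ℝ → ℝ) :
    μ[(fun ω => g (Y (n+1) ω)) | F n] =ᵐ[μ]
      fun ω => ∑ k ∈ Finset.range (M (n+1) + 1),
        g ((k : ℝ) / (M (n+1))) *
          (((M (n+1)).choose k : ℝ) * Y n ω ^ k * (1 - Y n ω) ^ (M (n+1) - k)) := by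
  have hm0 : ((M (n+1) : ℝ)) ≠ 0 := Nat.cast_ne_zero.2 (hM (n+1)).ne'
  set m := M (n+1) with hmdef
  set A : ℕ → Set Ω := fun k => {ω | Y (n + 1) ω * m = (k : ℝ)} with hA
  have hmeasA : ∀ k, MeasurableSet (A k) := by
    intro k
    exact measurableSet_eq_fun ((hmeas (n+1)).mul_const _) measurable_const
  have hintg : ∀ k, Integrable ((A k).indicator (fun _ => (1:ℝ))) μ :=
    fun k => (integrable_const (1:ℝ)).indicator (hmeasA k)
  have hdecomp : (fun ω => g (Y (n+1) ω))
      = ∑ k ∈ range (m+1), g ((k:ℝ)/m) • (A k).indicator (fun _ => (1:ℝ)) := by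
    funext ω
    obtain ⟨k₀, hk₀le, hY⟩ := hint (n+1) ω
    rw [← hmdef] at hY
    have hmem : ∀ k : ℕ, ω ∈ A k ↔ k = k₀ := by
      intro k
      simp only [hA, Set.mem_setOf_eq, hY, div_mul_cancel₀ _ hm0]
      constructor
      · intro h; exact_mod_cast h.symm
      · intro h; subst h; rfl
    rw [Finset.sum_apply, Finset.sum_eq_single_of_mem k₀ (mem_range.2 (Nat.lt_succ_of_le hk₀le))]
    · simp [Set.indicator_of_mem ((hmem k₀).2 rfl), hY]
    · intro k _ hk
      have : ω ∉ A k := fun h => hk ((hmem k).1 h)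
      simp [Set.indicator_of_notMem this]
  rw [hdecomp]
  refine (condExp_finset_sum (fun k _ => (hintg k).smul (g ((k:ℝ)/m))) (F n)).trans ?_
  have h2 : ∀ k ∈ range (m+1),
      μ[g ((k:ℝ)/m) • (A k).indicator (fun _ => (1:ℝ)) | F n] =ᵐ[μ]
        fun ω => g ((k:ℝ)/m) * ((m.choose k : ℝ) * Y n ω ^ k * (1 - Y n ω) ^ (m - k)) := by
    intro k hk
    refine (condExp_smul (g ((k:ℝ)/m)) _ (F n)).trans ?_
    filter_upwards [hbin n k (Nat.lt_succ_iff.1 (mem_range.1 hk))] with ω hω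
    simp only [Pi.smul_apply, smul_eq_mul, hA, ← hmdef] at hω ⊢
    rw [hω]
  refine (eventuallyEq_sum h2).trans ?_
  filter_upwards [] with ω
  simp [Finset.sum_apply]

end Aux

/-- Wright-Fisher model with `∑ 1/M n < ∞`: for all `ε, η > 0` there is a level `l`
such that for every `L > l`, `P(|Y L - Y l| ≥ η) < ε`. -/
theorem stmt_7 {Ω : Type*} [m0 : MeasurableSpace Ω] (μ : Measure Ω)
    [IsProbabilityMeasure μ] (F : Filtration ℕ m0)
    (M : ℕ → ℕ) (hM : ∀ n, 0 < M n)
    (hconv : Summable (fun n => 1 / (M n : ℝ)))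
    (Y : ℕ → Ω → ℝ)
    (hadapt : Adapted F Y)
    (hmeas : ∀ n, Measurable (Y n))
    (hrange : ∀ n, ∀ ω, Y n ω ∈ Set.Icc (0 : ℝ) 1)
    (hint : ∀ n, ∀ ω, ∃ k : ℕ, k ≤ M n ∧ Y n ω = (k : ℝ) / M n)
    (hbin : ∀ n, ∀ k : ℕ, k ≤ M (n + 1) →
      μ[Set.indicator {ω | Y (n + 1) ω * M (n + 1) = (k : ℝ)} (fun _ => (1 : ℝ)) | F n]
        =ᵐ[μ] fun ω =>
          ((M (n + 1)).choose k : ℝ) * Y n ω ^ k * (1 - Y n ω) ^ (M (n + 1) - k)) :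
    ∀ ε > (0 : ℝ), ∀ η > (0 : ℝ), ∃ l : ℕ, ∀ L > l,
      (μ {ω | η ≤ |Y L ω - Y l ω|}).toReal < ε := by
  -- integrability of bounded measurable functions
  have hI : ∀ (f : Ω → ℝ) (C : ℝ), Measurable f → (∀ ω, |f ω| ≤ C) → Integrable f μ := by
    intro f C hf hb
    exact (integrable_const C).mono' hf.aestronglyMeasurable
      (Filter.Eventually.of_forall (by simpa [Real.norm_eq_abs] using hb))
  have hY1 : ∀ n ω, |Y n ω| ≤ 1 := by
    intro n ω
    have h := hrange n ω
    rw [abs_le]; exact ⟨by linarith [h.1], h.2⟩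
  have hIY : ∀ n, Integrable (Y n) μ := fun n => hI _ 1 (hmeas n) (hY1 n)
  -- first conditional moment
  have E1 : ∀ n, μ[Y (n+1) | F n] =ᵐ[μ] Y n := by
    intro n
    have hm0 : ((M (n+1) : ℝ)) ≠ 0 := Nat.cast_ne_zero.2 (hM (n+1)).ne'
    refine (WF_moment μ F M hM Y hmeas hint hbin n id).trans (Filter.Eventually.of_forall ?_)
    intro ω
    simp only [id]
    have hterm : ∀ k : ℕ, (k : ℝ) / (M (n+1)) *
        (((M (n+1)).choose k : ℝ) * Y n ω ^ k * (1 - Y n ω) ^ (M (n+1) - k))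
        = (k : ℝ) * (((M (n+1)).choose k : ℝ) * Y n ω ^ k * (1 - Y n ω) ^ (M (n+1) - k))
          / (M (n+1)) := by
      intro k; ring
    rw [Finset.sum_congr rfl fun k _ => hterm k, ← Finset.sum_div, WF_sum_kb]
    field_simp
  -- second conditional moment
  have E2 : ∀ n, μ[(fun ω => Y (n+1) ω ^ 2) | F n] =ᵐ[μ]
      fun ω => Y n ω ^ 2 + Y n ω * (1 - Y n ω) / (M (n+1)) := by
    intro n
    have hm0 : ((M (n+1) : ℝ)) ≠ 0 := Nat.cast_ne_zero.2 (hM (n+1)).ne'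
    refine (WF_moment μ F M hM Y hmeas hint hbin n (· ^ 2)).trans
      (Filter.Eventually.of_forall ?_)
    intro ω
    beta_reduce
    have hterm : ∀ k : ℕ, ((k : ℝ) / (M (n+1))) ^ 2 *
        (((M (n+1)).choose k : ℝ) * Y n ω ^ k * (1 - Y n ω) ^ (M (n+1) - k))
        = (k : ℝ) ^ 2 * (((M (n+1)).choose k : ℝ) * Y n ω ^ k * (1 - Y n ω) ^ (M (n+1) - k))
          / (M (n+1)) ^ 2 := by
      intro k; ring
    rw [Finset.sum_congr rfl fun k _ => hterm k, ← Finset.sum_div, WF_sum_k2b]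
    field_simp
    ring
  -- one-step bound
  have step : ∀ l n, l ≤ n →
      (∫ ω, (Y (n+1) ω - Y l ω) ^ 2 ∂μ)
        ≤ (∫ ω, (Y n ω - Y l ω) ^ 2 ∂μ) + 1 / (4 * (M (n+1) : ℝ)) := by
    intro l n hln
    have hm0 : (0:ℝ) < (M (n+1) : ℝ) := Nat.cast_pos.2 (hM (n+1))
    set f : Ω → ℝ := fun ω => (Y (n+1) ω - Y l ω) ^ 2 with hf
    set f1 : Ω → ℝ := fun ω => Y (n+1) ω ^ 2 with hf1
    set f2 : Ω → ℝ := fun ω => (-2 * Y l ω) * Y (n+1) ω with hf2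
    set f3 : Ω → ℝ := Y l * Y l with hf3
    have hf_eq : f = f1 + f2 + f3 := by
      funext ω; simp only [hf, hf1, hf2, hf3, Pi.add_apply, Pi.mul_apply]; ring
    have If1 : Integrable f1 μ := by
      refine hI _ 1 ((hmeas (n+1)).pow_const 2) fun ω => ?_
      rw [abs_pow]
      exact pow_le_one₀ (abs_nonneg _) (hY1 _ ω)
    have If2 : Integrable f2 μ := by
      refine hI _ 2 ((measurable_const.mul (hmeas l)).mul (hmeas (n+1))) fun ω => ?_
      have h1 := hY1 l ω; have h2 := hY1 (n+1) ω
      have ha1 := abs_nonneg (Y l ω); have ha2 := abs_nonneg (Y (n+1) ω)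
      rw [abs_mul, abs_mul]
      have : |(-2 : ℝ)| = 2 := by norm_num
      rw [this]
      nlinarith
    have If3 : Integrable f3 μ := by
      refine hI _ 1 ((hmeas l).mul (hmeas l)) fun ω => ?_
      simp only [hf3, Pi.mul_apply]
      rw [abs_mul]
      nlinarith [hY1 l ω, abs_nonneg (Y l ω)]
    have If : Integrable f μ := by
      refine hI _ 4 (((hmeas (n+1)).sub (hmeas l)).pow_const 2) fun ω => ?_
      rw [abs_pow]
      have : |Y (n+1) ω - Y l ω| ≤ 2 := by
        have := hY1 (n+1) ω; have := hY1 l ω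
        calc |Y (n+1) ω - Y l ω| ≤ |Y (n+1) ω| + |Y l ω| := abs_sub _ _
          _ ≤ 2 := by linarith
      nlinarith [abs_nonneg (Y (n+1) ω - Y l ω)]
    have hYlSM : StronglyMeasurable[F n] (Y l) := ((hadapt l).mono (F.mono hln) le_rfl).stronglyMeasurable
    -- conditional expectation of f
    have hc2 : μ[f2 | F n] =ᵐ[μ] fun ω => -2 * Y l ω * Y n ω := by
      have hsm : StronglyMeasurable[F n] (fun ω => -2 * Y l ω) :=
        stronglyMeasurable_const.mul hYlSM
      have hmul : (fun ω => -2 * Y l ω) * Y (n+1) = f2 := by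
        funext ω; simp [hf2]
      have := condExp_mul_of_stronglyMeasurable_left hsm (hmul ▸ If2) (hIY (n+1))
      refine (hmul ▸ this).trans ?_
      filter_upwards [E1 n] with ω hω
      simp [hω]
    have hc3 : μ[f3 | F n] =ᵐ[μ] f3 :=
      Filter.EventuallyEq.of_eq
        (condExp_of_stronglyMeasurable (F.le n) (hYlSM.mul hYlSM) If3)
    have hc : μ[f | F n] =ᵐ[μ]
        fun ω => (Y n ω - Y l ω) ^ 2 + Y n ω * (1 - Y n ω) / (M (n+1)) := by
      rw [hf_eq]
      refine (condExp_add (If1.add If2) If3 (F n)).trans ?_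
      have h12 : μ[f1 + f2 | F n] =ᵐ[μ] μ[f1 | F n] + μ[f2 | F n] := condExp_add If1 If2 (F n)
      filter_upwards [h12, E2 n, hc2, hc3] with ω h12ω h1ω h2ω h3ω
      rw [← hf1] at h1ω
      simp only [Pi.add_apply] at h12ω ⊢
      rw [h12ω, h1ω, h2ω, h3ω]
      simp only [hf3, Pi.mul_apply]
      ring
    -- integrate
    have hv : Integrable (fun ω => Y n ω * (1 - Y n ω) / (M (n+1) : ℝ)) μ := by
      refine hI _ 1 (((hmeas n).mul (measurable_const.sub (hmeas n))).div_const _) fun ω => ?_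
      have h := hrange n ω
      have h1 : (1:ℝ) ≤ (M (n+1) : ℝ) := Nat.one_le_cast.2 (hM (n+1))
      have hq : 0 ≤ Y n ω * (1 - Y n ω) := mul_nonneg h.1 (by linarith [h.2])
      have hq1 : Y n ω * (1 - Y n ω) ≤ 1 := by nlinarith [h.1, h.2]
      rw [abs_of_nonneg (div_nonneg hq (le_of_lt hm0))]
      rw [div_le_one hm0]
      linarith
    have hg : Integrable (fun ω => (Y n ω - Y l ω) ^ 2) μ := by
      refine hI _ 4 (((hmeas n).sub (hmeas l)).pow_const 2) fun ω => ?_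
      rw [abs_pow]
      have : |Y n ω - Y l ω| ≤ 2 := by
        have := hY1 n ω; have := hY1 l ω
        calc |Y n ω - Y l ω| ≤ |Y n ω| + |Y l ω| := abs_sub _ _
          _ ≤ 2 := by linarith
      nlinarith [abs_nonneg (Y n ω - Y l ω)]
    have hvle : (∫ ω, Y n ω * (1 - Y n ω) / (M (n+1) : ℝ) ∂μ) ≤ 1 / (4 * (M (n+1) : ℝ)) := by
      have hpt : ∀ ω, Y n ω * (1 - Y n ω) / (M (n+1) : ℝ) ≤ 1 / (4 * (M (n+1) : ℝ)) := by
        intro ω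
        have h := hrange n ω
        have hq : Y n ω * (1 - Y n ω) ≤ 1 / 4 := by nlinarith [sq_nonneg (2 * Y n ω - 1)]
        calc Y n ω * (1 - Y n ω) / (M (n+1) : ℝ) ≤ (1/4) / (M (n+1) : ℝ) :=
              (div_le_div_iff_of_pos_right hm0).2 hq
          _ = 1 / (4 * (M (n+1) : ℝ)) := by rw [div_div]
      calc (∫ ω, Y n ω * (1 - Y n ω) / (M (n+1) : ℝ) ∂μ)
          ≤ ∫ _ω, 1 / (4 * (M (n+1) : ℝ)) ∂μ := integral_mono hv (integrable_const _) hpt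
        _ = 1 / (4 * (M (n+1) : ℝ)) := by simp
    calc (∫ ω, f ω ∂μ) = ∫ ω, (μ[f | F n]) ω ∂μ := (integral_condExp (F.le n)).symm
      _ = ∫ ω, ((Y n ω - Y l ω) ^ 2 + Y n ω * (1 - Y n ω) / (M (n+1) : ℝ)) ∂μ :=
          integral_congr_ae hc
      _ = (∫ ω, (Y n ω - Y l ω) ^ 2 ∂μ) + ∫ ω, Y n ω * (1 - Y n ω) / (M (n+1) : ℝ) ∂μ :=
          integral_add hg hv
      _ ≤ (∫ ω, (Y n ω - Y l ω) ^ 2 ∂μ) + 1 / (4 * (M (n+1) : ℝ)) := by linarith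
  -- cumulative bound by induction
  have key : ∀ l L, l ≤ L →
      (∫ ω, (Y L ω - Y l ω) ^ 2 ∂μ) ≤ ∑ j ∈ Finset.Ico l L, 1 / (4 * (M (j+1) : ℝ)) := by
    intro l L h
    induction L, h using Nat.le_induction with
    | base => simp
    | succ n hn ih =>
      calc (∫ ω, (Y (n+1) ω - Y l ω) ^ 2 ∂μ)
          ≤ (∫ ω, (Y n ω - Y l ω) ^ 2 ∂μ) + 1 / (4 * (M (n+1) : ℝ)) := step l n hn
        _ ≤ (∑ j ∈ Finset.Ico l n, 1 / (4 * (M (j+1) : ℝ))) + 1 / (4 * (M (n+1) : ℝ)) := by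
            linarith
        _ = ∑ j ∈ Finset.Ico l (n+1), 1 / (4 * (M (j+1) : ℝ)) :=
            (Finset.sum_Ico_succ_top hn _).symm
  -- conclusion
  intro ε hε η hη
  have hδ : (0:ℝ) < ε * η ^ 2 := by positivity
  have hs : Summable (fun j : ℕ => 1 / (4 * (M (j+1) : ℝ))) := by
    have h1 : Summable (fun j : ℕ => 1 / (M (j+1) : ℝ)) :=
      hconv.comp_injective fun a b h => by omega
    exact (h1.mul_left (4⁻¹)).congr fun j => by
      rw [one_div, one_div, mul_inv]
  obtain ⟨s, hsv⟩ := hs.vanishing (Metric.ball_mem_nhds 0 hδ)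
  refine ⟨s.sup id + 1, fun L hL => ?_⟩
  set l := s.sup id + 1 with hl
  have hdisj : Disjoint (Finset.Ico l L) s := by
    rw [Finset.disjoint_left]
    intro j hj hjs
    have h1 := Finset.le_sup (f := id) hjs
    have h2 := (Finset.mem_Ico.1 hj).1
    simp only [id] at h1
    omega
  have hsum : ∑ j ∈ Finset.Ico l L, 1 / (4 * (M (j+1) : ℝ)) < ε * η ^ 2 := by
    have h := hsv _ hdisj
    rw [Metric.mem_ball, dist_zero_right, Real.norm_eq_abs] at h
    exact lt_of_le_of_lt (le_abs_self _) h
  -- Chebyshev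
  set S : Set Ω := {ω | η ≤ |Y L ω - Y l ω|} with hS
  have hSm : MeasurableSet S :=
    measurableSet_le measurable_const ((hmeas L).sub (hmeas l)).abs
  have hind : ∀ ω, S.indicator (fun _ => η ^ 2) ω ≤ (Y L ω - Y l ω) ^ 2 := by
    intro ω
    by_cases hω : ω ∈ S
    · rw [Set.indicator_of_mem hω]
      have hd : η ≤ |Y L ω - Y l ω| := hω
      calc η ^ 2 ≤ |Y L ω - Y l ω| ^ 2 := by nlinarith [abs_nonneg (Y L ω - Y l ω)]
        _ = (Y L ω - Y l ω) ^ 2 := sq_abs _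
    · rw [Set.indicator_of_notMem hω]
      positivity
  have hindint : Integrable (S.indicator (fun _ => η ^ 2)) μ :=
    (integrable_const _).indicator hSm
  have hgL : Integrable (fun ω => (Y L ω - Y l ω) ^ 2) μ := by
    refine hI _ 4 (((hmeas L).sub (hmeas l)).pow_const 2) fun ω => ?_
    rw [abs_pow]
    have : |Y L ω - Y l ω| ≤ 2 := by
      have := hY1 L ω; have := hY1 l ω
      calc |Y L ω - Y l ω| ≤ |Y L ω| + |Y l ω| := abs_sub _ _
        _ ≤ 2 := by linarith
    nlinarith [abs_nonneg (Y L ω - Y l ω)]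
  have hcheb : η ^ 2 * (μ S).toReal ≤ ∫ ω, (Y L ω - Y l ω) ^ 2 ∂μ := by
    have h1 : (∫ ω, S.indicator (fun _ => η ^ 2) ω ∂μ) = (μ S).toReal * η ^ 2 := by
      rw [integral_indicator_const _ hSm, smul_eq_mul, measureReal_def]
    calc η ^ 2 * (μ S).toReal = ∫ ω, S.indicator (fun _ => η ^ 2) ω ∂μ := by
          rw [h1]; ring
      _ ≤ ∫ ω, (Y L ω - Y l ω) ^ 2 ∂μ := integral_mono hindint hgL hind
  have hfin : η ^ 2 * (μ S).toReal < ε * η ^ 2 :=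
    lt_of_le_of_lt (hcheb.trans (key l L (by omega))) hsum
  have hη2 : (0:ℝ) < η ^ 2 := by positivity
  nlinarith [ENNReal.toReal_nonneg (a := μ S)]
end

section
/- Let B be a Bratteli diagram whose incidence matrix entries all lie in {1,...,r} and which is impartial with constant α ∈ (0,1): for every n, every v ∈ V_{n+1}, and every i ∈ {1,...,r}, the set V_n^{v,i} = {w ∈ V_n : f^{(n)}_{v,w} = i} satisfies |V_n^{v,i}| ≥ α|V_n|. Fix a level N, and let A ⊆ V_N be chosen randomly by including each vertex v independently with probability p_v, where |p_v - β| < δ for all v. Then the probability that A fails to be (β, δ+ε)-equitable is at most 2 r |V_{N+1}| e^{-2α|V_N|ε²}. -/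
open MeasureTheory ProbabilityTheory

open scoped Classical

section Aux


/-- `(2 - x) * exp x ≤ 2 + x` for `x ≥ 0`. -/
lemma pade_aux {x : ℝ} (hx : 0 ≤ x) : (2 - x) * Real.exp x ≤ 2 + x := by
  have key : ∀ y : ℝ, HasDerivAt (fun s => (2 + s) * Real.exp (-s) + s - 2)
      (1 - (1 + y) * Real.exp (-y)) y := by
    intro y
    have h1 : HasDerivAt (fun s : ℝ => Real.exp (-s)) (-Real.exp (-y)) y := by
      simpa [Function.comp_def] using (Real.hasDerivAt_exp (-y)).comp y ((hasDerivAt_id y).neg)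
    have h2 : HasDerivAt (fun s : ℝ => (2 + s) * Real.exp (-s))
        ((0 + 1) * Real.exp (-y) + (2 + y) * (-Real.exp (-y))) y := by
      simpa [Pi.add_def, Pi.mul_def] using ((hasDerivAt_const y (2:ℝ)).add (hasDerivAt_id y)).mul h1
    have h3 := (h2.add (hasDerivAt_id y)).sub_const 2
    exact h3.congr_deriv (by ring)
  have hmono : Monotone (fun s => (2 + s) * Real.exp (-s) + s - 2) := by
    apply monotone_of_deriv_nonneg
    · exact fun y => (key y).differentiableAt
    · intro y
      rw [(key y).deriv]
      have : (1 + y) * Real.exp (-y) ≤ 1 := by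
        rcases le_or_gt (1 + y) 0 with h | h
        · exact le_trans (mul_nonpos_of_nonpos_of_nonneg h (Real.exp_nonneg _)) zero_le_one
        · have := Real.add_one_le_exp (-y)
          calc (1 + y) * Real.exp (-y) ≤ Real.exp y * Real.exp (-y) := by
                have := Real.add_one_le_exp y
                nlinarith [Real.exp_nonneg (-y)]
            _ = 1 := by rw [← Real.exp_add]; simp
      linarith
  have h0 := hmono hx
  simp only [add_zero, neg_zero, Real.exp_zero, mul_one] at h0
  have h0' : 2 - x ≤ (2 + x) * Real.exp (-x) := by linarith
  have := mul_le_mul_of_nonneg_right h0' (Real.exp_nonneg x)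
  rwa [mul_assoc, ← Real.exp_add, neg_add_cancel, Real.exp_zero, mul_one] at this

/-- `(e^t - 1)(4-t)² ≤ 16 t` on `[0,4]`. -/
lemma pade_sq {t : ℝ} (h0 : 0 ≤ t) (h4 : t ≤ 4) :
    (Real.exp t - 1) * (4 - t) ^ 2 ≤ 16 * t := by
  have hx : (0:ℝ) ≤ t / 2 := by linarith
  have h := pade_aux hx
  have h' : (4 - t) * Real.exp (t / 2) ≤ 4 + t := by nlinarith
  have hnn : 0 ≤ (4 - t) * Real.exp (t / 2) :=
    mul_nonneg (by linarith) (Real.exp_nonneg _)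
  have hsq : ((4 - t) * Real.exp (t / 2)) ^ 2 ≤ (4 + t) ^ 2 := by
    nlinarith
  have hee : Real.exp (t / 2) * Real.exp (t / 2) = Real.exp t := by
    rw [← Real.exp_add]; ring_nf
  nlinarith [Real.exp_nonneg t]

/-- Key inequality: `4 p(1-p)(e^t - 1) ≤ t ((1-p) + p e^t)` for `p ∈ [0,1]`, `t ≥ 0`. -/
lemma key_ineq {p t : ℝ} (hp0 : 0 ≤ p) (hp1 : p ≤ 1) (ht : 0 ≤ t) :
    4 * (p * (1 - p) * (Real.exp t - 1)) ≤ t * ((1 - p) + p * Real.exp t) := by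
  have hE : 1 ≤ Real.exp t := Real.one_le_exp ht
  rcases le_or_gt t 4 with h4 | h4
  · have hB := pade_sq ht h4
    nlinarith [sq_nonneg (2 * p + (t - 4) / 4), sq_nonneg (4 - t)]
  · nlinarith [mul_nonneg hp0 (sub_nonneg.mpr hE), mul_nonneg (mul_nonneg hp0 hp0) (sub_nonneg.mpr hE)]

/-- Hoeffding's lemma for the Bernoulli mgf, `t ≥ 0`. -/
lemma hoeffding_nonneg {p t : ℝ} (hp0 : 0 ≤ p) (hp1 : p ≤ 1) (ht : 0 ≤ t) :
    (1 - p) + p * Real.exp t ≤ Real.exp (p * t + t ^ 2 / 8) := by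
  set g : ℝ → ℝ := fun s => p * s + s ^ 2 / 8 - Real.log ((1 - p) + p * Real.exp s) with hg
  have hw : ∀ s : ℝ, 0 < (1 - p) + p * Real.exp s := by
    intro s
    rcases lt_or_eq_of_le hp1 with h | h
    · have : 0 ≤ p * Real.exp s := mul_nonneg hp0 (Real.exp_nonneg _)
      linarith
    · have : 0 < p * Real.exp s := mul_pos (by linarith) (Real.exp_pos _)
      linarith
  have hderiv : ∀ s : ℝ, HasDerivAt g
      (p + s / 4 - p * Real.exp s / ((1 - p) + p * Real.exp s)) s := by
    intro s
    have h1 : HasDerivAt (fun u : ℝ => (1 - p) + p * Real.exp u) (p * Real.exp s) s := by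
      simpa using ((Real.hasDerivAt_exp s).const_mul p).const_add (1 - p)
    have h2 : HasDerivAt (fun u : ℝ => Real.log ((1 - p) + p * Real.exp u))
        (p * Real.exp s / ((1 - p) + p * Real.exp s)) s := h1.log (hw s).ne'
    have h3 : HasDerivAt (fun u : ℝ => p * u + u ^ 2 / 8) (p + s * 2 / 8) s := by
      have := ((hasDerivAt_id s).const_mul p).add
        (((hasDerivAt_pow 2 s)).div_const 8)
      simpa [mul_comm, Pi.add_def] using this
    have h4 := h3.sub h2
    exact h4.congr_deriv (by ring)
  have hmono : MonotoneOn g (Set.Ici (0:ℝ)) := by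
    apply monotoneOn_of_deriv_nonneg (convex_Ici 0)
    · exact fun s _ => (hderiv s).continuousAt.continuousWithinAt
    · exact fun s _ => (hderiv s).differentiableAt.differentiableWithinAt
    · intro s hs
      rw [interior_Ici] at hs
      rw [(hderiv s).deriv]
      have hs0 : 0 ≤ s := le_of_lt hs
      have hk := key_ineq hp0 hp1 hs0
      rw [sub_nonneg, div_le_iff₀ (hw s)]
      nlinarith
  have h0 : g 0 = 0 := by simp [hg]
  have hgt : 0 ≤ g t := by
    have := hmono (Set.self_mem_Ici) (Set.mem_Ici.mpr ht) ht
    rwa [h0] at this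
  have hlog : Real.log ((1 - p) + p * Real.exp t) ≤ p * t + t ^ 2 / 8 := by
    simp only [hg] at hgt; linarith
  calc (1 - p) + p * Real.exp t
      = Real.exp (Real.log ((1 - p) + p * Real.exp t)) := (Real.exp_log (hw t)).symm
    _ ≤ Real.exp (p * t + t ^ 2 / 8) := Real.exp_le_exp.mpr hlog

/-- Hoeffding's lemma for the Bernoulli mgf, all `t`. -/
lemma hoeffding_bernoulli {p : ℝ} (hp0 : 0 ≤ p) (hp1 : p ≤ 1) (t : ℝ) :
    (1 - p) + p * Real.exp t ≤ Real.exp (p * t + t ^ 2 / 8) := by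
  rcases le_or_gt 0 t with ht | ht
  · exact hoeffding_nonneg hp0 hp1 ht
  · have h := hoeffding_nonneg (p := 1 - p) (t := -t) (by linarith) (by linarith) (by linarith)
    have hmul := mul_le_mul_of_nonneg_right h (Real.exp_nonneg t)
    have e1 : ((1 - (1 - p)) + (1 - p) * Real.exp (-t)) * Real.exp t
        = (1 - p) + p * Real.exp t := by
      have : Real.exp (-t) * Real.exp t = 1 := by rw [← Real.exp_add]; simp
      nlinarith
    have e2 : Real.exp ((1 - p) * -t + (-t) ^ 2 / 8) * Real.exp t
        = Real.exp (p * t + t ^ 2 / 8) := by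
      rw [← Real.exp_add]; ring_nf
    rw [e1, e2] at hmul
    exact hmul


open MeasureTheory ProbabilityTheory
open scoped Classical

section Bern
variable {Ω : Type*} [MeasurableSpace Ω] {μ : Measure Ω} [IsProbabilityMeasure μ]
  {X : Ω → ℝ}

lemma bern_integrable (hm : Measurable X) (hb : ∀ᵐ ω ∂μ, X ω = 0 ∨ X ω = 1) :
    Integrable X μ := by
  refine Integrable.mono' (integrable_const 1) hm.aestronglyMeasurable ?_
  filter_upwards [hb] with ω h
  rcases h with h | h <;> simp [h]

lemma bern_exp_integrable (hm : Measurable X) (hb : ∀ᵐ ω ∂μ, X ω = 0 ∨ X ω = 1) (t : ℝ) :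
    Integrable (fun ω => Real.exp (t * X ω)) μ := by
  refine Integrable.mono' (integrable_const (max 1 (Real.exp t)))
    ((hm.const_mul t).exp.aestronglyMeasurable) ?_
  filter_upwards [hb] with ω h
  rcases h with h | h <;>
    simp [h, abs_of_nonneg (Real.exp_nonneg _), le_max_left, le_max_right]

lemma bern_mean_nonneg (hb : ∀ᵐ ω ∂μ, X ω = 0 ∨ X ω = 1) : 0 ≤ μ[X] := by
  refine integral_nonneg_of_ae ?_
  filter_upwards [hb] with ω h
  rcases h with h | h <;> simp [h]

lemma bern_mean_le_one (hm : Measurable X) (hb : ∀ᵐ ω ∂μ, X ω = 0 ∨ X ω = 1) : μ[X] ≤ 1 := by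
  have : μ[X] ≤ μ[fun _ => (1:ℝ)] := by
    refine integral_mono_ae (bern_integrable hm hb) (integrable_const 1) ?_
    filter_upwards [hb] with ω h
    rcases h with h | h <;> simp [h]
  simpa using this

lemma bern_mgf (hm : Measurable X) (hb : ∀ᵐ ω ∂μ, X ω = 0 ∨ X ω = 1) (t : ℝ) :
    mgf X μ t = (1 - μ[X]) + μ[X] * Real.exp t := by
  have heq : (fun ω => Real.exp (t * X ω)) =ᵐ[μ] fun ω => 1 + (Real.exp t - 1) * X ω := by
    filter_upwards [hb] with ω h
    rcases h with h | h <;> simp [h]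
  rw [mgf, integral_congr_ae heq,
    integral_add (integrable_const 1) ((bern_integrable hm hb).const_mul _)]
  simp only [integral_const, measure_univ, ENNReal.toReal_one, smul_eq_mul, one_mul,
    integral_const_mul, probReal_univ]
  ring

end Bern

section Tail
variable {Ω ι : Type*} [MeasurableSpace Ω] {μ : Measure Ω} [IsProbabilityMeasure μ]
  {Z : ι → Ω → ℝ}

lemma mgf_sum_le (hmeas : ∀ w, Measurable (Z w))
    (hBern : ∀ w, ∀ᵐ ω ∂μ, Z w ω = 0 ∨ Z w ω = 1)
    (hindep : iIndepFun Z μ)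
    (s : Finset ι) (t : ℝ) :
    mgf (∑ w ∈ s, Z w) μ t
      ≤ Real.exp (t * (∑ w ∈ s, μ[Z w]) + s.card * (t ^ 2 / 8)) := by
  rw [hindep.mgf_sum hmeas s]
  calc ∏ w ∈ s, mgf (Z w) μ t
      ≤ ∏ w ∈ s, Real.exp (μ[Z w] * t + t ^ 2 / 8) := by
        refine Finset.prod_le_prod (fun w _ => mgf_nonneg) (fun w _ => ?_)
        rw [bern_mgf (hmeas w) (hBern w)]
        exact hoeffding_bernoulli (bern_mean_nonneg (hBern w))
          (bern_mean_le_one (hmeas w) (hBern w)) t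
    _ = Real.exp (∑ w ∈ s, (μ[Z w] * t + t ^ 2 / 8)) := (Real.exp_sum s _).symm
    _ = Real.exp (t * (∑ w ∈ s, μ[Z w]) + s.card * (t ^ 2 / 8)) := by
        rw [Finset.sum_add_distrib, Finset.sum_const, ← Finset.sum_mul]
        ring_nf

/-- Chernoff upper tail for a sum of independent `{0,1}`-valued variables. -/
lemma upper_tail (hmeas : ∀ w, Measurable (Z w))
    (hBern : ∀ w, ∀ᵐ ω ∂μ, Z w ω = 0 ∨ Z w ω = 1)
    (hindep : iIndepFun Z μ)
    (s : Finset ι) {ε : ℝ} (hε : 0 < ε) :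
    (μ {ω | (∑ w ∈ s, μ[Z w]) + s.card * ε ≤ ∑ w ∈ s, Z w ω}).toReal
      ≤ Real.exp (-2 * s.card * ε ^ 2) := by
  have hint : Integrable (fun ω => Real.exp (4 * ε * (∑ w ∈ s, Z w) ω)) μ :=
    hindep.integrable_exp_mul_sum hmeas fun w _ => bern_exp_integrable (hmeas w) (hBern w) _
  have hch := measure_ge_le_exp_mul_mgf (μ := μ) (X := ∑ w ∈ s, Z w)
    ((∑ w ∈ s, μ[Z w]) + s.card * ε) (by positivity : (0:ℝ) ≤ 4 * ε) hint
  have hset : {ω | (∑ w ∈ s, μ[Z w]) + s.card * ε ≤ ∑ w ∈ s, Z w ω}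
      = {ω | (∑ w ∈ s, μ[Z w]) + s.card * ε ≤ (∑ w ∈ s, Z w) ω} := by
    ext ω; simp [Finset.sum_apply]
  rw [hset]
  refine hch.trans ?_
  calc Real.exp (-(4 * ε) * ((∑ w ∈ s, μ[Z w]) + s.card * ε)) * mgf (∑ w ∈ s, Z w) μ (4 * ε)
      ≤ Real.exp (-(4 * ε) * ((∑ w ∈ s, μ[Z w]) + s.card * ε)) *
        Real.exp (4 * ε * (∑ w ∈ s, μ[Z w]) + s.card * ((4 * ε) ^ 2 / 8)) := by
        refine mul_le_mul_of_nonneg_left ?_ (Real.exp_nonneg _)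
        exact mgf_sum_le hmeas hBern hindep s _
    _ = Real.exp (-2 * s.card * ε ^ 2) := by
        rw [← Real.exp_add]; congr 1; ring

/-- Chernoff lower tail. -/
lemma lower_tail (hmeas : ∀ w, Measurable (Z w))
    (hBern : ∀ w, ∀ᵐ ω ∂μ, Z w ω = 0 ∨ Z w ω = 1)
    (hindep : iIndepFun Z μ)
    (s : Finset ι) {ε : ℝ} (hε : 0 < ε) :
    (μ {ω | ∑ w ∈ s, Z w ω ≤ (∑ w ∈ s, μ[Z w]) - s.card * ε}).toReal
      ≤ Real.exp (-2 * s.card * ε ^ 2) := by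
  have hint : Integrable (fun ω => Real.exp (-(4 * ε) * (∑ w ∈ s, Z w) ω)) μ :=
    hindep.integrable_exp_mul_sum hmeas fun w _ => bern_exp_integrable (hmeas w) (hBern w) _
  have hch := measure_le_le_exp_mul_mgf (μ := μ) (X := ∑ w ∈ s, Z w)
    ((∑ w ∈ s, μ[Z w]) - s.card * ε) (by linarith : -(4 * ε) ≤ 0) hint
  have hset : {ω | ∑ w ∈ s, Z w ω ≤ (∑ w ∈ s, μ[Z w]) - s.card * ε}
      = {ω | (∑ w ∈ s, Z w) ω ≤ (∑ w ∈ s, μ[Z w]) - s.card * ε} := by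
    ext ω; simp [Finset.sum_apply]
  rw [hset]
  refine hch.trans ?_
  calc Real.exp (-(-(4 * ε)) * ((∑ w ∈ s, μ[Z w]) - s.card * ε)) * mgf (∑ w ∈ s, Z w) μ (-(4 * ε))
      ≤ Real.exp (-(-(4 * ε)) * ((∑ w ∈ s, μ[Z w]) - s.card * ε)) *
        Real.exp (-(4 * ε) * (∑ w ∈ s, μ[Z w]) + s.card * ((-(4 * ε)) ^ 2 / 8)) := by
        refine mul_le_mul_of_nonneg_left ?_ (Real.exp_nonneg _)
        exact mgf_sum_le hmeas hBern hindep s _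
    _ = Real.exp (-2 * s.card * ε ^ 2) := by
        rw [← Real.exp_add]; congr 1; ring

end Tail
end Aux

/-- Lemma 4.9: Let `B` be an impartial Bratteli diagram (entries of the incidence
matrix between levels `N` and `N+1` lie in `{1,…,r}`, and each set
`V_N^{v,i} = {w : f v w = i}` has size at least `α |V_N|`).  If `A ⊆ V_N` is random,
each vertex `w` included independently with probability `p w` where `|p w - β| < δ`
(inclusion indicated by the Bernoulli variable `Z w`), then the probability that `A`
fails to be `(β, δ+ε)`-equitable is at most `2 r |V_{N+1}| exp(-2 α |V_N| ε²)`. -/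
theorem stmt_10 {Ω VN VN1 : Type*} [MeasurableSpace Ω] (μ : Measure Ω)
    [IsProbabilityMeasure μ] [Fintype VN] [Fintype VN1]
    (r : ℕ) (hr : 0 < r) (f : VN1 → VN → ℕ)
    (hf : ∀ v w, 1 ≤ f v w ∧ f v w ≤ r)
    (α : ℝ) (hα : 0 < α) (hα1 : α < 1)
    (himp : ∀ (v : VN1) (i : ℕ), 1 ≤ i → i ≤ r →
      α * Fintype.card VN ≤ ((Finset.univ.filter (fun w => f v w = i)).card : ℝ))
    (Z : VN → Ω → ℝ) (p : VN → ℝ) (β δ ε : ℝ) (hε : 0 < ε) (hδ : 0 < δ)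
    (hmeas : ∀ w, Measurable (Z w))
    (hBern : ∀ w, ∀ᵐ ω ∂μ, Z w ω = 0 ∨ Z w ω = 1)
    (hmean : ∀ w, μ[Z w] = p w)
    (hp : ∀ w, |p w - β| < δ)
    (hindep : iIndepFun Z μ) :
    (μ {ω | ¬ ∀ (v : VN1) (i : ℕ), 1 ≤ i → i ≤ r →
        |(∑ w ∈ Finset.univ.filter (fun w => f v w = i), Z w ω) /
            (((Finset.univ.filter (fun w => f v w = i)).card : ℝ)) - β| ≤ δ + ε}).toReal
      ≤ 2 * r * Fintype.card VN1 * Real.exp (-2 * α * Fintype.card VN * ε ^ 2) := by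
  by_cases hVN : Fintype.card VN = 0
  · -- degenerate case: level N is empty
    by_cases hVN1 : Nonempty VN1
    · have hL : (μ {ω | ¬ ∀ (v : VN1) (i : ℕ), 1 ≤ i → i ≤ r →
          |(∑ w ∈ Finset.univ.filter (fun w => f v w = i), Z w ω) /
              (((Finset.univ.filter (fun w => f v w = i)).card : ℝ)) - β| ≤ δ + ε}).toReal
          ≤ 1 := by
        calc (μ _).toReal ≤ (μ Set.univ).toReal :=
              ENNReal.toReal_mono (measure_ne_top μ _) (measure_mono (Set.subset_univ _))
          _ = 1 := by simp
      have hexp : Real.exp (-2 * α * Fintype.card VN * ε ^ 2) = 1 := by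
        rw [hVN]; simp
      rw [hexp]
      have h1 : (1:ℝ) ≤ r := by exact_mod_cast hr
      have h2 : (1:ℝ) ≤ Fintype.card VN1 := by
        have := Fintype.card_pos_iff.mpr hVN1
        exact_mod_cast this
      nlinarith
    · have hemp : IsEmpty VN1 := not_nonempty_iff.mp hVN1
      have hE : {ω | ¬ ∀ (v : VN1) (i : ℕ), 1 ≤ i → i ≤ r →
          |(∑ w ∈ Finset.univ.filter (fun w => f v w = i), Z w ω) /
              (((Finset.univ.filter (fun w => f v w = i)).card : ℝ)) - β| ≤ δ + ε} = ∅ := by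
        ext ω
        simp only [Set.mem_setOf_eq, Set.mem_empty_iff_false, iff_false, not_not]
        exact fun v => (hemp.false v).elim
      rw [hE]
      simp only [measure_empty, ENNReal.toReal_zero]
      positivity
  -- main case
  have hVNpos : (0:ℝ) < Fintype.card VN := by
    exact_mod_cast Nat.pos_of_ne_zero hVN
  have hbadsub : {ω | ¬ ∀ (v : VN1) (i : ℕ), 1 ≤ i → i ≤ r →
        |(∑ w ∈ Finset.univ.filter (fun w => f v w = i), Z w ω) /
            (((Finset.univ.filter (fun w => f v w = i)).card : ℝ)) - β| ≤ δ + ε}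
      ⊆ ⋃ q ∈ (Finset.univ ×ˢ Finset.Icc 1 r : Finset (VN1 × ℕ)),
          {ω | δ + ε < |(∑ w ∈ Finset.univ.filter (fun w => f q.1 w = q.2), Z w ω) /
            (((Finset.univ.filter (fun w => f q.1 w = q.2)).card : ℝ)) - β|} := by
    intro ω hω
    simp only [Set.mem_setOf_eq] at hω
    push_neg at hω
    obtain ⟨v, i, h1, h2, h3⟩ := hω
    refine Set.mem_iUnion₂.mpr ⟨(v, i), ?_, ?_⟩
    · simp [Finset.mem_product, Finset.mem_Icc, h1, h2]
    · exact h3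
  have hμle := (measure_mono hbadsub).trans (measure_biUnion_finset_le (μ := μ) _ _)
  have hsum : (μ {ω | ¬ ∀ (v : VN1) (i : ℕ), 1 ≤ i → i ≤ r →
        |(∑ w ∈ Finset.univ.filter (fun w => f v w = i), Z w ω) /
            (((Finset.univ.filter (fun w => f v w = i)).card : ℝ)) - β| ≤ δ + ε}).toReal
      ≤ ∑ q ∈ (Finset.univ ×ˢ Finset.Icc 1 r : Finset (VN1 × ℕ)),
          (μ {ω | δ + ε < |(∑ w ∈ Finset.univ.filter (fun w => f q.1 w = q.2), Z w ω) /
            (((Finset.univ.filter (fun w => f q.1 w = q.2)).card : ℝ)) - β|}).toReal := by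
    have hne : (∑ q ∈ (Finset.univ ×ˢ Finset.Icc 1 r : Finset (VN1 × ℕ)),
        μ {ω | δ + ε < |(∑ w ∈ Finset.univ.filter (fun w => f q.1 w = q.2), Z w ω) /
            (((Finset.univ.filter (fun w => f q.1 w = q.2)).card : ℝ)) - β|}) ≠ ⊤ :=
      ENNReal.sum_ne_top.mpr fun q _ => measure_ne_top μ _
    have := ENNReal.toReal_mono hne hμle
    rwa [ENNReal.toReal_sum (fun q _ => measure_ne_top μ _)] at this
  have hterm : ∀ (v : VN1) (i : ℕ), 1 ≤ i → i ≤ r →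
      (μ {ω | δ + ε < |(∑ w ∈ Finset.univ.filter (fun w => f v w = i), Z w ω) /
            (((Finset.univ.filter (fun w => f v w = i)).card : ℝ)) - β|}).toReal
      ≤ 2 * Real.exp (-2 * α * Fintype.card VN * ε ^ 2) := by
    intro v i h1 h2
    have hcard : α * Fintype.card VN ≤ ((Finset.univ.filter (fun w => f v w = i)).card : ℝ) :=
      himp v i h1 h2
    have hkpos : (0:ℝ) < ((Finset.univ.filter (fun w => f v w = i)).card : ℝ) :=
      lt_of_lt_of_le (by positivity) hcard
    have hmean' : (∑ w ∈ Finset.univ.filter (fun w => f v w = i), μ[Z w])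
        = ∑ w ∈ Finset.univ.filter (fun w => f v w = i), p w :=
      Finset.sum_congr rfl fun w _ => hmean w
    -- subset of the two tails
    have hsub2 : {ω | δ + ε < |(∑ w ∈ Finset.univ.filter (fun w => f v w = i), Z w ω) /
            (((Finset.univ.filter (fun w => f v w = i)).card : ℝ)) - β|}
        ⊆ {ω | (∑ w ∈ Finset.univ.filter (fun w => f v w = i), p w) +
              ((Finset.univ.filter (fun w => f v w = i)).card : ℝ) * ε
              ≤ ∑ w ∈ Finset.univ.filter (fun w => f v w = i), Z w ω}
          ∪ {ω | (∑ w ∈ Finset.univ.filter (fun w => f v w = i), Z w ω)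
              ≤ (∑ w ∈ Finset.univ.filter (fun w => f v w = i), p w) -
              ((Finset.univ.filter (fun w => f v w = i)).card : ℝ) * ε} := by
      intro ω hω
      simp only [Set.mem_setOf_eq, Set.mem_union] at hω ⊢
      set T := ∑ w ∈ Finset.univ.filter (fun w => f v w = i), Z w ω with hT
      set m := ∑ w ∈ Finset.univ.filter (fun w => f v w = i), p w with hm
      set k := ((Finset.univ.filter (fun w => f v w = i)).card : ℝ) with hk
      have e1 : T / k - β = (T - k * β) / k := by field_simp
      have h1' : k * (δ + ε) < |T - k * β| := by
        have := mul_lt_mul_of_pos_left hω hkpos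
        rwa [e1, abs_div, abs_of_pos hkpos, mul_div_cancel₀ _ hkpos.ne'] at this
      have h2' : |m - k * β| ≤ k * δ := by
        have e2 : m - k * β = ∑ w ∈ Finset.univ.filter (fun w => f v w = i), (p w - β) := by
          rw [Finset.sum_sub_distrib, Finset.sum_const, nsmul_eq_mul, hm, hk]
        rw [e2]
        calc |∑ w ∈ Finset.univ.filter (fun w => f v w = i), (p w - β)|
            ≤ ∑ w ∈ Finset.univ.filter (fun w => f v w = i), |p w - β| :=
              Finset.abs_sum_le_sum_abs _ _
          _ ≤ ∑ _w ∈ Finset.univ.filter (fun w => f v w = i), δ :=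
              Finset.sum_le_sum fun w _ => (hp w).le
          _ = k * δ := by rw [Finset.sum_const, nsmul_eq_mul, hk]
      have h3' : k * ε < |T - m| := by
        have habs := abs_sub_abs_le_abs_sub (T - k * β) (m - k * β)
        have e3 : (T - k * β) - (m - k * β) = T - m := by ring
        rw [e3] at habs
        linarith [mul_pos hkpos hδ]
      rcases lt_abs.mp h3' with h | h
      · left; linarith
      · right; rw [neg_sub] at h; linarith
    have hub := upper_tail hmeas hBern hindep (Finset.univ.filter (fun w => f v w = i)) hε
    have hlb := lower_tail hmeas hBern hindep (Finset.univ.filter (fun w => f v w = i)) hε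
    rw [hmean'] at hub hlb
    have hUB : (μ {ω | δ + ε < |(∑ w ∈ Finset.univ.filter (fun w => f v w = i), Z w ω) /
            (((Finset.univ.filter (fun w => f v w = i)).card : ℝ)) - β|}).toReal
        ≤ (μ {ω | (∑ w ∈ Finset.univ.filter (fun w => f v w = i), p w) +
              ((Finset.univ.filter (fun w => f v w = i)).card : ℝ) * ε
              ≤ ∑ w ∈ Finset.univ.filter (fun w => f v w = i), Z w ω}).toReal
          + (μ {ω | (∑ w ∈ Finset.univ.filter (fun w => f v w = i), Z w ω)
              ≤ (∑ w ∈ Finset.univ.filter (fun w => f v w = i), p w) -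
              ((Finset.univ.filter (fun w => f v w = i)).card : ℝ) * ε}).toReal := by
      have hle := (measure_mono hsub2).trans (measure_union_le (μ := μ) _ _)
      have := ENNReal.toReal_mono
        (by exact ENNReal.add_ne_top.mpr ⟨measure_ne_top μ _, measure_ne_top μ _⟩) hle
      rwa [ENNReal.toReal_add (measure_ne_top μ _) (measure_ne_top μ _)] at this
    have hexp : Real.exp (-2 * ((Finset.univ.filter (fun w => f v w = i)).card : ℝ) * ε ^ 2)
        ≤ Real.exp (-2 * α * Fintype.card VN * ε ^ 2) := by
      apply Real.exp_le_exp.mpr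
      nlinarith [sq_nonneg ε]
    calc _ ≤ _ := hUB
      _ ≤ Real.exp (-2 * ((Finset.univ.filter (fun w => f v w = i)).card : ℝ) * ε ^ 2)
          + Real.exp (-2 * ((Finset.univ.filter (fun w => f v w = i)).card : ℝ) * ε ^ 2) :=
          add_le_add hub hlb
      _ ≤ 2 * Real.exp (-2 * α * Fintype.card VN * ε ^ 2) := by linarith
  calc (μ {ω | ¬ ∀ (v : VN1) (i : ℕ), 1 ≤ i → i ≤ r →
        |(∑ w ∈ Finset.univ.filter (fun w => f v w = i), Z w ω) /
            (((Finset.univ.filter (fun w => f v w = i)).card : ℝ)) - β| ≤ δ + ε}).toReal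
      ≤ ∑ q ∈ (Finset.univ ×ˢ Finset.Icc 1 r : Finset (VN1 × ℕ)),
          (μ {ω | δ + ε < |(∑ w ∈ Finset.univ.filter (fun w => f q.1 w = q.2), Z w ω) /
            (((Finset.univ.filter (fun w => f q.1 w = q.2)).card : ℝ)) - β|}).toReal := hsum
    _ ≤ ∑ _q ∈ (Finset.univ ×ˢ Finset.Icc 1 r : Finset (VN1 × ℕ)),
          2 * Real.exp (-2 * α * Fintype.card VN * ε ^ 2) := by
        refine Finset.sum_le_sum fun q hq => ?_
        rw [Finset.mem_product, Finset.mem_Icc] at hq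
        exact hterm q.1 q.2 hq.2.1 hq.2.2
    _ = 2 * r * Fintype.card VN1 * Real.exp (-2 * α * Fintype.card VN * ε ^ 2) := by
        rw [Finset.sum_const, nsmul_eq_mul, Finset.card_product, Finset.card_univ, Nat.card_Icc]
        push_cast
        ring
end

section
/- Consider the infinite Pólya-type scheme: for each n, vertices of V_{n+1} independently each select a uniformly random parent in V_n, where |V_n| = M_n and ∑_n 1/M_n < ∞. Fix levels n_1 < n_2 < ... with M_{n_k} > 4^k such that, splitting alleles in half at each level n_k, inequality (proportion drift) |Y_{n_{k+1}} − Y_{n_k}| < 4^{-(k+1)} holds for all 2^k alleles simultaneously with probability at least 1 − κ. Then with probability at least 1 − κ, every allele class persists at all levels (the corresponding vertex sets A_s are nonempty for all finite binary strings s), and hence the set of infinite ancestral lines (maximal paths) is uncountable. -/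
open MeasureTheory ProbabilityTheory

/-- The ancestor at level `k` of the vertex `v` of level `l` (for `k ≤ l`), given the
parent maps `π : ℕ → ℕ → ℕ` (`π n v` is the parent at level `n` of vertex `v` of
level `n+1`). -/
def ancestor (π : ℕ → ℕ → ℕ) (k : ℕ) : ℕ → ℕ → ℕ
  | l, v => if _ : k < l then ancestor π k (l - 1) (π (l - 1) v) else v
  termination_by l => l
  decreasing_by omega

/-- The descendants at level `nk (k+1)` of the set `As` of vertices of level `nk k`
(where `s` has length `k`): vertices of level `nk (k+1)` whose ancestor at level
`nk k` lies in `As`.  Vertices of level `n` are `0, …, M n - 1`. -/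
def descendants (M : ℕ → ℕ) (nk : ℕ → ℕ) (π : ℕ → ℕ → ℕ) (s : List Bool)
    (As : Finset ℕ) : Finset ℕ :=
  (Finset.range (M (nk (s.length + 1)))).filter
    (fun v => ancestor π (nk s.length) (nk (s.length + 1)) v ∈ As)

lemma anc_self (π : ℕ → ℕ → ℕ) (k v : ℕ) : ancestor π k k v = v := by
  rw [ancestor]; simp

lemma anc_succ (π : ℕ → ℕ → ℕ) {k l : ℕ} (h : k ≤ l) (v : ℕ) :
    ancestor π k (l + 1) v = ancestor π k l (π l v) := by
  rw [ancestor]; simp [Nat.lt_succ_of_le h]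

lemma anc_lt {M : ℕ → ℕ} {π : ℕ → ℕ → ℕ} (hπ : ∀ n w, π n w < M n) {k : ℕ} :
    ∀ {l} (v : ℕ), k < l → ancestor π k l v < M k := by
  intro l
  induction l with
  | zero => omega
  | succ l ih =>
    intro v h
    rw [anc_succ π (by omega)]
    rcases Nat.lt_or_ge k l with h' | h'
    · exact ih _ h'
    · have : k = l := by omega
      subst this
      rw [anc_self]
      exact hπ _ _

lemma anc_comp (π : ℕ → ℕ → ℕ) {k m : ℕ} (hkm : k ≤ m) :
    ∀ {l} (v : ℕ), m ≤ l → ancestor π k l v = ancestor π k m (ancestor π m l v) := by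
  intro l
  induction l with
  | zero =>
    intro v h
    have : m = 0 := by omega
    subst this; rw [anc_self]
  | succ l ih =>
    intro v h
    rcases Nat.lt_or_ge m (l + 1) with h' | h'
    · rw [anc_succ π (by omega), anc_succ π (by omega), ih _ (by omega)]
    · have : m = l + 1 := by omega
      subst this; rw [anc_self]

section
variable {M nk : ℕ → ℕ} {π : ℕ → ℕ → ℕ} {A : List Bool → Finset ℕ}

lemma mem_desc (hAunion : ∀ s, A (s ++ [false]) ∪ A (s ++ [true]) = descendants M nk π s (A s))
    {t : List Bool} {c : Bool} {v : ℕ} (hv : v ∈ A (t ++ [c])) :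
    v < M (nk (t.length + 1)) ∧ ancestor π (nk t.length) (nk (t.length + 1)) v ∈ A t := by
  have hv' : v ∈ descendants M nk π t (A t) := by
    rw [← hAunion t]
    cases c
    · exact Finset.mem_union_left _ hv
    · exact Finset.mem_union_right _ hv
  rw [descendants, Finset.mem_filter, Finset.mem_range] at hv'
  exact hv'

lemma memA_lt (hM0 : M 0 = 1) (hnk0 : nk 0 = 0) (hA0 : A ([] : List Bool) = {0})
    (hAunion : ∀ s, A (s ++ [false]) ∪ A (s ++ [true]) = descendants M nk π s (A s)) :
    ∀ (s : List Bool) (v : ℕ), v ∈ A s → v < M (nk s.length) := by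
  intro s
  induction s using List.reverseRecOn with
  | nil =>
    intro v hv
    rw [hA0, Finset.mem_singleton] at hv
    subst hv
    simp [hnk0, hM0]
  | append_singleton t c ih =>
    intro v hv
    have := (mem_desc hAunion hv).1
    simpa using this

lemma anc_memA (hnkmono : StrictMono nk)
    (hAunion : ∀ s, A (s ++ [false]) ∪ A (s ++ [true]) = descendants M nk π s (A s)) :
    ∀ (s : List Bool) (j : ℕ) (v : ℕ), j ≤ s.length → v ∈ A s →
      ancestor π (nk j) (nk s.length) v ∈ A (s.take j) := by
  intro s
  induction s using List.reverseRecOn with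
  | nil =>
    intro j v hj hv
    simp only [List.length_nil, Nat.le_zero] at hj
    subst hj
    simpa [anc_self] using hv
  | append_singleton t c ih =>
    intro j v hj hv
    simp only [List.length_append, List.length_singleton] at hj ⊢
    rcases Nat.lt_or_ge j (t.length + 1) with h' | h'
    · have hj' : j ≤ t.length := by omega
      obtain ⟨-, hanc⟩ := mem_desc hAunion hv
      rw [anc_comp π (hnkmono.monotone hj') _ (hnkmono.monotone (Nat.le_succ _))]
      have := ih j _ hj' hanc
      rwa [List.take_append_of_le_length hj']
    · have : j = t.length + 1 := by omega
      subst this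
      rw [anc_self]
      rw [List.take_of_length_le (by simp)]
      exact hv

lemma A_disj (hnkmono : StrictMono nk)
    (hAunion : ∀ s, A (s ++ [false]) ∪ A (s ++ [true]) = descendants M nk π s (A s))
    (hAdisj : ∀ s, Disjoint (A (s ++ [false])) (A (s ++ [true]))) :
    ∀ (n : ℕ) (s t : List Bool), s.length = n → t.length = n → s ≠ t →
      Disjoint (A s) (A t) := by
  intro n
  induction n with
  | zero =>
    intro s t hs ht hne
    exact absurd (by rw [List.eq_nil_of_length_eq_zero hs, List.eq_nil_of_length_eq_zero ht]) hne
  | succ n ih =>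
    intro s t hs ht hne
    rcases List.eq_nil_or_concat s with rfl | ⟨s', c, rfl⟩
    · simp at hs
    rcases List.eq_nil_or_concat t with rfl | ⟨t', d, rfl⟩
    · simp at ht
    simp only [List.concat_eq_append, List.length_append, List.length_singleton] at hs ht hne ⊢
    by_cases hst : s' = t'
    · subst hst
      have hcd : c ≠ d := by
        intro h; exact hne (by rw [h])
      cases c <;> cases d <;> simp_all [List.concat_eq_append] <;>
        first
        | exact hAdisj s'
        | exact (hAdisj s').symm
    · rw [Finset.disjoint_left]
      intro v hvs hvt
      obtain ⟨-, h1⟩ := mem_desc hAunion hvs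
      obtain ⟨-, h2⟩ := mem_desc hAunion hvt
      have hs' : s'.length = n := by omega
      have ht' : t'.length = n := by omega
      rw [hs'] at h1
      rw [ht'] at h2
      exact Finset.disjoint_left.1 (ih s' t' hs' ht' hst) h1 h2

end

section
variable {M nk : ℕ → ℕ} {π : ℕ → ℕ → ℕ} {A : List Bool → Finset ℕ}

lemma A_card (hM : ∀ n, 0 < M n) (hM0 : M 0 = 1) (hnk0 : nk 0 = 0)
    (hnkbig : ∀ k, 4 ^ k < M (nk k))
    (hA0 : A ([] : List Bool) = {0})
    (hAunion : ∀ s, A (s ++ [false]) ∪ A (s ++ [true]) = descendants M nk π s (A s))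
    (hAdisj : ∀ s, Disjoint (A (s ++ [false])) (A (s ++ [true])))
    (hAhalf : ∀ s, (A (s ++ [false])).card = ((descendants M nk π s (A s)).card + 1) / 2)
    (hdrift : ∀ s : List Bool,
      |((descendants M nk π s (A s)).card : ℝ) / (M (nk (s.length + 1)))
        - ((A s).card : ℝ) / (M (nk s.length))| < ((4 : ℝ) ^ (s.length + 1))⁻¹) :
    ∀ s : List Bool, ((4 : ℝ) ^ s.length)⁻¹ ≤ ((A s).card : ℝ) / (M (nk s.length)) := by
  intro s
  induction s using List.reverseRecOn with
  | nil => simp [hA0, hnk0, hM0]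
  | append_singleton t c ih =>
    set k := t.length with hk
    set D := (descendants M nk π t (A t)).card with hD
    -- card of the two halves
    have hsum : (A (t ++ [false])).card + (A (t ++ [true])).card = D := by
      rw [← Finset.card_union_of_disjoint (hAdisj t), hAunion t]
    have hkey : D ≤ 2 * (A (t ++ [c])).card + 1 := by
      have hhalf := hAhalf t
      cases c
      · rw [hhalf]; omega
      · omega
    -- real bounds
    have hM'pos : (0 : ℝ) < (M (nk (k + 1)) : ℝ) := by exact_mod_cast hM _
    have hMpos : (0 : ℝ) < (M (nk k) : ℝ) := by exact_mod_cast hM _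
    set q : ℝ := ((4 : ℝ) ^ (k + 1))⁻¹ with hq
    have hqpos : 0 < q := by positivity
    have h4 : ((4 : ℝ) ^ k)⁻¹ = 4 * q := by
      rw [hq, pow_succ, mul_inv]
      ring
    have hdr := hdrift t
    have hDge : (D : ℝ) / (M (nk (k + 1))) ≥ 3 * q := by
      have h1 : ((A t).card : ℝ) / (M (nk k)) ≥ 4 * q := by rw [← h4]; exact ih
      have h2 : ((D : ℝ)) / (M (nk (k + 1))) - ((A t).card : ℝ) / (M (nk k)) > -q := by
        have := abs_lt.1 hdr
        linarith [this.1]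
      linarith
    have hqM : 1 ≤ q * (M (nk (k + 1)) : ℝ) := by
      have hbig : ((4 : ℝ) ^ (k + 1)) < (M (nk (k + 1)) : ℝ) := by exact_mod_cast hnkbig (k + 1)
      rw [hq]
      rw [inv_mul_eq_div, le_div_iff₀ (by positivity)]
      linarith
    have hcard : ((A (t ++ [c])).card : ℝ) ≥ ((D : ℝ) - 1) / 2 := by
      have : (D : ℝ) ≤ 2 * ((A (t ++ [c])).card : ℝ) + 1 := by exact_mod_cast hkey
      linarith
    have hDbig : (D : ℝ) ≥ 3 * q * (M (nk (k + 1))) := by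
      rw [ge_iff_le, ← le_div_iff₀ hM'pos]
      exact hDge
    have hlen : (t ++ [c]).length = k + 1 := by simp [hk]
    rw [hlen, ← hq, le_div_iff₀ hM'pos]
    nlinarith [hqpos, hM'pos]
def pre (b : ℕ → Bool) (k : ℕ) : List Bool := List.ofFn (fun i : Fin k => b i)

lemma pre_length (b : ℕ → Bool) (k : ℕ) : (pre b k).length = k := by simp [pre]

lemma pre_succ (b : ℕ → Bool) (k : ℕ) : pre b (k + 1) = pre b k ++ [b k] := by
  rw [pre, List.ofFn_succ']; simp [List.concat_eq_append, pre]

lemma pre_take (b : ℕ → Bool) {j k : ℕ} (h : j ≤ k) : (pre b k).take j = pre b j := by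
  induction k with
  | zero =>
    have : j = 0 := by omega
    subst this; simp [pre]
  | succ k ih =>
    rcases Nat.lt_or_ge j (k + 1) with h' | h'
    · rw [pre_succ, List.take_append_of_le_length (by rw [pre_length]; omega), ih (by omega)]
    · have : j = k + 1 := by omega
      subst this
      exact List.take_of_length_le (by rw [pre_length])

lemma pre_inj {b b' : ℕ → Bool} {k : ℕ} (h : pre b k = pre b' k) {i : ℕ} (hi : i < k) :
    b i = b' i := by
  rw [pre, pre, List.ofFn_inj] at h
  exact congrFun h ⟨i, hi⟩

section
variable {M nk : ℕ → ℕ} {π : ℕ → ℕ → ℕ} {A : List Bool → Finset ℕ}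

lemma exists_line
    (hrange : ∀ n v, π n v < M n) (hM0 : M 0 = 1) (hnk0 : nk 0 = 0)
    (hnkmono : StrictMono nk)
    (hA0 : A ([] : List Bool) = {0})
    (hAunion : ∀ s, A (s ++ [false]) ∪ A (s ++ [true]) = descendants M nk π s (A s))
    (hne : ∀ s, (A s).Nonempty) (b : ℕ → Bool) :
    ∃ x : ℕ → ℕ, (∀ n, x n < M n) ∧ (∀ n, π n (x (n + 1)) = x n) ∧
      ∀ k, x (nk k) ∈ A (pre b k) := by
  classical
  set Qs : ℕ → ℕ → Set ℕ := fun n w =>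
    {k | n ≤ nk k ∧ ∃ v ∈ A (pre b k), ancestor π n (nk k) v = w} with hQs
  set Q : ℕ → ℕ → Prop := fun n w => (Qs n w).Infinite with hQ
  -- Q implies bound
  have hQlt : ∀ n w, Q n w → w < M n := by
    intro n w hw
    obtain ⟨k, hk⟩ := hw.nonempty
    obtain ⟨hnk, v, hv, hanc⟩ := hk
    rcases Nat.lt_or_ge n (nk k) with h' | h'
    · rw [← hanc]; exact anc_lt hrange _ h'
    · have : n = nk k := by omega
      subst this
      rw [anc_self] at hanc
      subst hanc
      have := memA_lt hM0 hnk0 hA0 hAunion _ _ hv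
      rwa [pre_length] at this
  -- base case
  have hQ0 : Q 0 0 := by
    apply Set.infinite_of_injective_forall_mem (f := fun k : ℕ => k) Function.injective_id
    intro k
    refine ⟨Nat.zero_le _, ?_⟩
    obtain ⟨v, hv⟩ := hne (pre b k)
    refine ⟨v, hv, ?_⟩
    rcases Nat.eq_zero_or_pos (nk k) with h0 | h0
    · rw [h0, anc_self]
      have hk0 : k = 0 := by
        by_contra hk
        have := hnkmono.le_apply (x := k)
        omega
      subst hk0
      have : v ∈ A ([] : List Bool) := by simpa [pre] using hv
      rw [hA0, Finset.mem_singleton] at this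
      exact this
    · have := anc_lt hrange (k := 0) (l := nk k) v h0
      omega
  -- step
  have hQstep : ∀ n w, Q n w → ∃ w', Q (n + 1) w' ∧ π n w' = w := by
    intro n w hw
    set S' : Set ℕ := Qs n w ∩ {k | n + 1 ≤ nk k} with hS'
    have hS'inf : S'.Infinite := by
      have hfin : {k | nk k < n + 1}.Finite := by
        apply Set.Finite.subset (Set.finite_le_nat n)
        intro k hk
        have := hnkmono.le_apply (x := k)
        simp only [Set.mem_setOf_eq] at hk ⊢
        omega
      refine Set.Infinite.mono ?_ (hw.diff hfin)
      intro k hk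
      exact ⟨hk.1, by have := hk.2; simp only [Set.mem_setOf_eq, not_lt] at this ⊢; omega⟩
    haveI : Infinite ↥S' := hS'inf.to_subtype
    -- chosen witness in A (pre b k) for k ∈ S'
    have hwit : ∀ κ : ↥S', ∃ v ∈ A (pre b κ.1), ancestor π n (nk κ.1) v = w :=
      fun κ => κ.2.1.2
    choose g hg1 hg2 using hwit
    have hbound : ∀ κ : ↥S', ancestor π (n + 1) (nk κ.1) (g κ) < M (n + 1) := by
      intro κ
      have hle : n + 1 ≤ nk κ.1 := κ.2.2
      rcases Nat.lt_or_ge (n + 1) (nk κ.1) with h' | h'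
      · exact anc_lt hrange _ h'
      · have : n + 1 = nk κ.1 := by omega
        rw [← this, anc_self, this]
        have := memA_lt hM0 hnk0 hA0 hAunion _ _ (hg1 κ)
        rwa [pre_length] at this
    set G : ↥S' → Fin (M (n + 1)) := fun κ => ⟨_, hbound κ⟩ with hG
    obtain ⟨y, hy⟩ := Finite.exists_infinite_fiber G
    haveI := hy
    refine ⟨(y : ℕ), ?_, ?_⟩
    · apply Set.infinite_of_injective_forall_mem
        (f := fun p : ↥(G ⁻¹' {y}) => (p.1.1 : ℕ))
        (hi := fun p q hpq => Subtype.ext (Subtype.ext hpq))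
      intro p
      refine ⟨p.1.2.2, g p.1, hg1 p.1, ?_⟩
      exact congrArg Fin.val p.2
    · obtain ⟨p⟩ := ‹Infinite ↥(G ⁻¹' {y})›.nonempty
      have hGp : G p.1 = y := p.2
      have hle : n + 1 ≤ nk p.1.1 := p.1.2.2
      have hcomp := anc_comp π (Nat.le_succ n) (m := n + 1) (g p.1) (hle)
      have hstep1 : ∀ u, ancestor π n (n + 1) u = π n u := by
        intro u
        rw [anc_succ π (le_refl n), anc_self]
      rw [hstep1] at hcomp
      have hyv : ((y : Fin (M (n+1))) : ℕ) = ancestor π (n + 1) (nk p.1.1) (g p.1) :=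
        (congrArg Fin.val hGp).symm
      rw [hyv, ← hcomp, hg2 p.1]
  -- build the line by recursion
  choose f hf1 hf2 using hQstep
  let X : (n : ℕ) → {w : ℕ // Q n w} :=
    fun n => Nat.rec ⟨0, hQ0⟩ (fun n p => ⟨f n p.1 p.2, hf1 n p.1 p.2⟩) n
  refine ⟨fun n => (X n).1, fun n => hQlt n _ (X n).2, fun n => hf2 n (X n).1 (X n).2, ?_⟩
  -- membership of A (pre b k)
  intro k
  obtain ⟨j, hj, hjk⟩ := (X (nk k)).2.exists_gt k
  obtain ⟨hle, v, hv, hanc⟩ := hj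
  have := anc_memA hnkmono hAunion (pre b j) k v (by rw [pre_length]; omega) hv
  rw [pre_length, pre_take b (by omega)] at this
  rwa [hanc] at this

end

lemma not_countable_funBool : ¬ Countable (ℕ → Bool) := by
  classical
  intro h
  have hf : Function.Injective (fun s : Set ℕ => fun n => if n ∈ s then true else false) := by
    intro s t hst
    ext n
    have := congrFun hst n
    by_cases hs : n ∈ s <;> by_cases ht : n ∈ t <;> simp_all
  have : Countable (Set ℕ) := hf.countable
  rcases this.exists_injective_nat with ⟨g, hg⟩
  exact Function.cantor_injective g hg

/-- Theorem 4.4 (second half), main step: the evolve-and-split argument.  Vertices of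
level `n+1` pick independent uniformly random parents at level `n` (`M n` vertices at
level `n`, `∑ 1/M n < ∞`, single root).  Fix levels `nk 0 = 0 < nk 1 < nk 2 < …` with
`M (nk k) > 4 ^ k`, and random allele classes `A ω s ⊆ V (nk |s|)`, indexed by binary
strings `s`, obtained by the evolve-and-split procedure: `A ω [] = {root}`, and
`A ω (s ++ [0])`, `A ω (s ++ [1])` split the descendants of `A ω s` into two halves.
Suppose that with probability at least `1 - κ` the proportion drift inequality
`| density(descendants of A_s) - density(A_s) | < 4^{-(|s|+1)}` holds for all strings
`s` simultaneously.  Then with probability at least `1 - κ`, every allele class `A s`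
is nonempty and the set of infinite ancestral lines (equivalently, of maximal paths of
the randomly ordered Bratteli diagram) is uncountable. -/
theorem stmt_14 {Ω : Type*} [MeasurableSpace Ω] (μ : Measure Ω)
    [IsProbabilityMeasure μ] (κ : ℝ) (hκ : 0 < κ)
    (M : ℕ → ℕ) (hM : ∀ n, 0 < M n) (hM0 : M 0 = 1)
    (hconv : Summable (fun n => 1 / (M n : ℝ)))
    (π : Ω → ℕ → ℕ → ℕ)
    (hrange : ∀ ω n v, π ω n v < M n)
    (hmeas : ∀ n v, Measurable (fun ω => π ω n v))
    (hindep : iIndepFun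
      (fun p : ℕ × ℕ => fun ω => π ω p.1 p.2) μ)
    (hunif : ∀ n v w, v < M (n + 1) → w < M n →
      μ {ω | π ω n v = w} = 1 / (M n : ENNReal))
    (nk : ℕ → ℕ) (hnk0 : nk 0 = 0) (hnkmono : StrictMono nk)
    (hnkbig : ∀ k, 4 ^ k < M (nk k))
    (A : Ω → List Bool → Finset ℕ)
    (hA0 : ∀ ω, A ω ([] : List Bool) = {0})
    (hAunion : ∀ ω s, A ω (s ++ [false]) ∪ A ω (s ++ [true])
       = descendants M nk (π ω) s (A ω s))
    (hAdisj : ∀ ω s, Disjoint (A ω (s ++ [false])) (A ω (s ++ [true])))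
    (hAhalf : ∀ ω s, (A ω (s ++ [false])).card
       = ((descendants M nk (π ω) s (A ω s)).card + 1) / 2)
    (hdrift : 1 - ENNReal.ofReal κ ≤
      μ {ω | ∀ s : List Bool,
        |((descendants M nk (π ω) s (A ω s)).card : ℝ) / (M (nk (s.length + 1)))
          - ((A ω s).card : ℝ) / (M (nk s.length))|
        < ((4 : ℝ) ^ (s.length + 1))⁻¹}) :
    1 - ENNReal.ofReal κ ≤
      μ {ω | (∀ s : List Bool, (A ω s).Nonempty) ∧
        ¬ Set.Countable
          {x : ℕ → ℕ | (∀ n, x n < M n) ∧ ∀ n, π ω n (x (n + 1)) = x n}} := by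
  classical
  refine le_trans hdrift (measure_mono ?_)
  intro ω hω
  simp only [Set.mem_setOf_eq] at hω ⊢
  have hcard := A_card hM hM0 hnk0 hnkbig (hA0 ω) (hAunion ω) (hAdisj ω) (hAhalf ω) hω
  have hne : ∀ s, (A ω s).Nonempty := by
    intro s
    rw [← Finset.card_pos]
    by_contra h
    have h0 : (A ω s).card = 0 := by omega
    have h1 := hcard s
    rw [h0] at h1
    simp only [Nat.cast_zero, zero_div] at h1
    have h2 : (0:ℝ) < ((4:ℝ) ^ s.length)⁻¹ := by positivity
    linarith
  refine ⟨hne, ?_⟩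
  intro hcount
  have hline := fun b : ℕ → Bool =>
    exists_line (hrange ω) hM0 hnk0 hnkmono (hA0 ω) (hAunion ω) hne b
  choose F hF1 hF2 hF3 using hline
  have hFmem : ∀ b, F b ∈ {x : ℕ → ℕ | (∀ n, x n < M n) ∧ ∀ n, π ω n (x (n + 1)) = x n} :=
    fun b => ⟨hF1 b, hF2 b⟩
  haveI := hcount.to_subtype
  have hinj : Function.Injective (fun b : ℕ → Bool =>
      (⟨F b, hFmem b⟩ : ↥{x : ℕ → ℕ | (∀ n, x n < M n) ∧ ∀ n, π ω n (x (n + 1)) = x n})) := by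
    intro b b' h
    by_contra hbb
    obtain ⟨i, hi⟩ := Function.ne_iff.1 hbb
    have hFe : F b = F b' := congrArg Subtype.val h
    have h1 : F b (nk (i + 1)) ∈ A ω (pre b (i + 1)) := hF3 b (i + 1)
    have h2 : F b (nk (i + 1)) ∈ A ω (pre b' (i + 1)) := by rw [hFe]; exact hF3 b' (i + 1)
    have hpre : pre b (i + 1) ≠ pre b' (i + 1) :=
      fun hp => hi (pre_inj hp (Nat.lt_succ_self i))
    exact Finset.disjoint_left.1
      (A_disj hnkmono (hAunion ω) (hAdisj ω) (i + 1) _ _ (pre_length _ _) (pre_length _ _) hpre)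
      h1 h2
  have : Countable (ℕ → Bool) := hinj.countable
  exact not_countable_funBool this
end
end
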